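/- arXiv:2405.12210 — 4 statements merged into one kernel-verified Lean document; each statement's English description precedes it below -/
import Mathlib

section
/- For each x ∈ ℝ, t ∈ [0,T] and k ∈ ℂ∖S, the function m obeys the symmetry m(x,t,k) = m(x,t,1/k). (Note that S contains 0 and is invariant under k ↦ 1/k, so 1/k ∈ ℂ∖S whenever k ∈ ℂ∖S.) -/
open MeasureTheory Filter Topology

noncomputable section

namespace Paper

/-- Iterated logarithm: `iterLog r` is the `r`-th iterate of `Real.log`. -/
def iterLog : ℕ → ℝ → ℝ
  | 0, s => s
  | r + 1, s => Real.log (iterLog r s)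

/-- `LOG(s; r⃗, a⃗, σ) = (-1)^σ ∏_j (log_{r_j} s)^{a_j}` (empty product convention for `p = 0`). -/
def LOG {p : ℕ} (r : Fin p → ℕ) (a : Fin p → ℝ) (σ : ℕ) (s : ℝ) : ℝ :=
  (-1 : ℝ) ^ σ * ∏ j : Fin p, iterLog (r j) s ^ a j

/-- `f(t) ≍ g(t)` as `t → T⁻`: there are `T₀ ∈ (0,T)` and `c₁, c₂ > 0` with
`c₁ g(t) ≤ f(t) ≤ c₂ g(t)` for all `t ∈ [T₀, T)`. -/
def AsympTo (T : ℝ) (f g : ℝ → ℝ) : Prop :=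
  ∃ T₀ ∈ Set.Ioo (0 : ℝ) T, ∃ c₁ > (0 : ℝ), ∃ c₂ > (0 : ℝ),
    ∀ t ∈ Set.Ico T₀ T, c₁ * g t ≤ f t ∧ f t ≤ c₂ * g t

/-- Partial derivative in `x`. -/
def px (u : ℝ → ℝ → ℝ) : ℝ → ℝ → ℝ := fun x t => deriv (fun x' => u x' t) x

/-- Partial derivative in `t`. -/
def pt (u : ℝ → ℝ → ℝ) : ℝ → ℝ → ℝ := fun x t => deriv (fun t' => u x t') t

/-- Mixed partial derivative `∂_x^{q₁} ∂_t^{q₂}` for real-valued functions. -/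
def pdR (q₁ q₂ : ℕ) (u : ℝ → ℝ → ℝ) : ℝ → ℝ → ℝ :=
  fun x t => iteratedDeriv q₁ (fun x' => iteratedDeriv q₂ (fun t' => u x' t') t) x

/-- Mixed partial derivative `∂_x^{q₁} ∂_t^{q₂}` for complex-valued functions. -/
def pdC (q₁ q₂ : ℕ) (g : ℝ → ℝ → ℂ) : ℝ → ℝ → ℂ :=
  fun x t => iteratedDeriv q₁ (fun x' => iteratedDeriv q₂ (fun t' => g x' t') t) x

/-- Schwartz class solution of the "bad" Boussinesq equation
`u_tt = u_xx + (u²)_xx + u_xxxx` on `ℝ × [0,T)`. -/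
def IsSchwartzSolution (T : ℝ) (u : ℝ → ℝ → ℝ) : Prop :=
  ContDiffOn ℝ (⊤ : ℕ∞) (fun q : ℝ × ℝ => u q.1 q.2) (Set.univ ×ˢ Set.Ico 0 T) ∧
  (∀ x : ℝ, ∀ t ∈ Set.Ico (0 : ℝ) T,
      pt (pt u) x t =
        px (px u) x t + px (px fun x' t' => u x' t' ^ 2) x t + px (px (px (px u))) x t) ∧
  (∀ N : ℕ, 1 ≤ N → ∀ τ ∈ Set.Ico (0 : ℝ) T, ∃ B : ℝ, ∀ x : ℝ, ∀ t ∈ Set.Icc (0 : ℝ) τ,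
      ∑ i ∈ Finset.range (N + 1), (1 + |x|) ^ N * |iteratedDeriv i (fun x' => u x' t) x| ≤ B)

/-- `ω = e^{2πi/3}`. -/
def ω : ℂ := Complex.exp (2 * Real.pi * Complex.I / 3)

/-- `e₁ = e^{-iπ/6}`. -/
def e₁ : ℂ := Complex.exp (-(Real.pi / 6) * Complex.I)

/-- `e₂ = e^{5iπ/6}`. -/
def e₂ : ℂ := Complex.exp (5 * Real.pi / 6 * Complex.I)

/-- `e₃ = e^{iπ/6}`. -/
def e₃ : ℂ := Complex.exp (Real.pi / 6 * Complex.I)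

/-- `e₄ = e^{7iπ/6}`. -/
def e₄ : ℂ := Complex.exp (7 * Real.pi / 6 * Complex.I)

/-- Contour integral over `Γ̃ = {r e^{-iπ/6} : r > 1} ∪ {r e^{5iπ/6} : r > 1}`,
each ray oriented in the direction of increasing modulus. -/
def contourInt (g : ℂ → ℂ) : ℂ :=
  (∫ r in Set.Ioi (1 : ℝ), g ((r : ℂ) * e₁)) * e₁ +
  (∫ r in Set.Ioi (1 : ℝ), g ((r : ℂ) * e₂)) * e₂

/-- The contour `Γ̃` as a set. -/
def Gammat : Set ℂ :=
  {k : ℂ | ∃ r : ℝ, 1 < r ∧ k = (r : ℂ) * e₁} ∪ {k : ℂ | ∃ r : ℝ, 1 < r ∧ k = (r : ℂ) * e₂}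

/-- `Γ̃_m = Γ̃ ∩ {k : |k| > 2}`. -/
def GammatM : Set ℂ := Gammat ∩ {k : ℂ | 2 < ‖k‖}

/-- The set `S`: the closure of
`{r e^{iπ/6} : r > 1} ∪ {r e^{7iπ/6} : r > 1} ∪ {r e^{5iπ/6} : 0 < r < 1} ∪ {r e^{-iπ/6} : 0 < r < 1}`. -/
def Sset : Set ℂ :=
  closure ({k : ℂ | ∃ r : ℝ, 1 < r ∧ k = (r : ℂ) * e₃} ∪
    {k : ℂ | ∃ r : ℝ, 1 < r ∧ k = (r : ℂ) * e₄} ∪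
    {k : ℂ | ∃ r : ℝ, 0 < r ∧ r < 1 ∧ k = (r : ℂ) * e₂} ∪
    {k : ℂ | ∃ r : ℝ, 0 < r ∧ r < 1 ∧ k = (r : ℂ) * e₁})

/-- `r̃(k) = (ω² - k²)/(1 - ω²k²)`. -/
def rtilde (k : ℂ) : ℂ := (ω ^ 2 - k ^ 2) / (1 - ω ^ 2 * k ^ 2)

/-- `f̃₀`: equals `f₂(k) = r̃(k) conj(f₁(1/conj k))` on the upper ray `(i, i∞)`
and `f₁(1/k)` on the lower ray `(-i, -i∞)`. -/
def ftilde0 (f₁ : ℂ → ℂ) (k : ℂ) : ℂ :=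
  if 0 < k.im then rtilde k * starRingEnd ℂ (f₁ (1 / starRingEnd ℂ k)) else f₁ (1 / k)

/-- The kernel `F(x,t,k,k₁)`. -/
def Fker (x₀ T : ℝ) (f₁ : ℂ → ℂ) (x t : ℝ) (k k₁ : ℂ) : ℂ :=
  Complex.exp (((x - x₀ : ℝ) : ℂ) / 2 * (ω * k₁)) *
  Complex.exp (((T - t : ℝ) : ℂ) / 4 * (ω * k₁) ^ 2) *
  (ω ^ 2 / (ω ^ 2 * k₁ - k) - ω / k₁ ^ 2 / (1 / (ω ^ 2 * k₁) - k)) *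
  (ftilde0 f₁ (ω * k₁) *
    Complex.exp (-((x : ℂ) / 2) * (1 / (ω * k₁)) + (t : ℂ) / 4 * (1 / (ω * k₁)) ^ 2) /
    (2 * (Real.pi : ℂ) * Complex.I))

/-- Iterated kernels: `mSeq F j` is `m_j`, with `mSeq F 0 ≡ 1` and
`m_{j+1}(k) = ∫_{Γ̃} F(k,k₁) m_j(k₁) dk₁`. -/
def mSeq (F : ℂ → ℂ → ℂ) : ℕ → ℂ → ℂ
  | 0 => fun _ => 1
  | j + 1 => fun k => contourInt fun k₁ => F k k₁ * mSeq F j k₁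

/-- `m(x,t,k) = 1 + Σ_{j=1}^∞ m_j(x,t,k)`. -/
def mFun (x₀ T : ℝ) (f₁ : ℂ → ℂ) (x t : ℝ) (k : ℂ) : ℂ :=
  1 + ∑' j : ℕ, mSeq (Fker x₀ T f₁ x t) (j + 1) k

/-- `F^{(1)}(x,t,k₁)`. -/
def F1ker (x₀ T : ℝ) (f₁ : ℂ → ℂ) (x t : ℝ) (k₁ : ℂ) : ℂ :=
  -(Complex.exp (((x - x₀ : ℝ) : ℂ) / 2 * (ω * k₁)) *
    Complex.exp (((T - t : ℝ) : ℂ) / 4 * (ω * k₁) ^ 2) *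
    Complex.exp (-((x : ℂ) / 2) * (1 / (ω * k₁)) + (t : ℂ) / 4 * (1 / (ω * k₁)) ^ 2) *
    (ftilde0 f₁ (ω * k₁) / (2 * (Real.pi : ℂ) * Complex.I)) * (ω ^ 2 - ω / k₁ ^ 2))

/-- `m1Seq x₀ T f₁ x t j = m_{j+1}^{(1)}(x,t)`, i.e. `m_j^{(1)} = m1Seq … (j-1)` for `j ≥ 1`. -/
def m1Seq (x₀ T : ℝ) (f₁ : ℂ → ℂ) (x t : ℝ) (j : ℕ) : ℂ :=
  contourInt fun k₁ => F1ker x₀ T f₁ x t k₁ * mSeq (Fker x₀ T f₁ x t) j k₁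

end Paper


namespace Paper

lemma omega_cube : ω ^ 3 = 1 := by
  rw [ω, ← Complex.exp_nat_mul]
  rw [show (3 : ℕ) * (2 * ↑Real.pi * Complex.I / 3) = 2 * ↑Real.pi * Complex.I by push_cast; ring]
  exact Complex.exp_two_pi_mul_I

lemma omega_ne_zero : ω ≠ 0 := Complex.exp_ne_zero _

lemma e₁_ne_zero : e₁ ≠ 0 := Complex.exp_ne_zero _
lemma e₂_ne_zero : e₂ ≠ 0 := Complex.exp_ne_zero _

lemma omega_sq_mul_e₁ : ω ^ 2 * e₁ = e₄ := by
  rw [ω, e₁, e₄, sq, ← Complex.exp_add, ← Complex.exp_add]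
  congr 1
  push_cast
  ring

lemma omega_sq_mul_e₂ : ω ^ 2 * e₂ = e₃ := by
  rw [ω, e₂, e₃, sq, ← Complex.exp_add, ← Complex.exp_add]
  rw [show 2 * (Real.pi : ℂ) * Complex.I / 3 + 2 * (Real.pi : ℂ) * Complex.I / 3 +
      5 * (Real.pi : ℂ) / 6 * Complex.I =
      (Real.pi : ℂ) / 6 * Complex.I + 2 * (Real.pi : ℂ) * Complex.I by ring]
  rw [Complex.exp_add, Complex.exp_two_pi_mul_I, mul_one]

lemma e₄_mul_e₂ : e₄ * e₂ = 1 := by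
  rw [e₄, e₂, ← Complex.exp_add]
  rw [show (7 * (Real.pi : ℂ) / 6 * Complex.I + 5 * (Real.pi : ℂ) / 6 * Complex.I)
      = 2 * (Real.pi : ℂ) * Complex.I by ring]
  exact Complex.exp_two_pi_mul_I

lemma e₃_mul_e₁ : e₃ * e₁ = 1 := by
  rw [e₃, e₁, ← Complex.exp_add]
  rw [show ((Real.pi : ℂ) / 6 * Complex.I + -((Real.pi : ℂ) / 6) * Complex.I) = 0 by ring]
  exact Complex.exp_zero

/-- The generating set of `Sset`. -/
def Sgen : Set ℂ :=
  {k : ℂ | ∃ r : ℝ, 1 < r ∧ k = (r : ℂ) * e₃} ∪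
    {k : ℂ | ∃ r : ℝ, 1 < r ∧ k = (r : ℂ) * e₄} ∪
    {k : ℂ | ∃ r : ℝ, 0 < r ∧ r < 1 ∧ k = (r : ℂ) * e₂} ∪
    {k : ℂ | ∃ r : ℝ, 0 < r ∧ r < 1 ∧ k = (r : ℂ) * e₁}

lemma Sgen_subset_Sset : Sgen ⊆ Sset := subset_closure

lemma zero_mem_Sset : (0 : ℂ) ∈ Sset := by
  rw [Sset, Metric.mem_closure_iff]
  intro ε hε
  set r : ℝ := min (ε / 2) (1 / 2) with hr
  have hr0 : 0 < r := lt_min (by linarith) (by norm_num)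
  have hr1 : r < 1 := lt_of_le_of_lt (min_le_right _ _) (by norm_num)
  refine ⟨(r : ℂ) * e₁, Or.inr ⟨r, hr0, hr1, rfl⟩, ?_⟩
  have habs : ‖e₁‖ = 1 := by
    rw [e₁, Complex.norm_exp]
    simp
  rw [Complex.dist_eq]
  simp only [zero_sub, norm_neg, norm_mul, habs, mul_one, Complex.norm_real, Real.norm_eq_abs,
    abs_of_pos hr0]
  exact lt_of_le_of_lt (min_le_left _ _) (by linarith)

lemma key_identity (k k₁ : ℂ) (hk : k ≠ 0) (hk1 : k₁ ≠ 0)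
    (hA : ω ^ 2 * k₁ ≠ k) (hB : ω ^ 2 * k₁ * k ≠ 1) :
    ω ^ 2 / (ω ^ 2 * k₁ - k) - ω / k₁ ^ 2 / (1 / (ω ^ 2 * k₁) - k)
      = ω ^ 2 / (ω ^ 2 * k₁ - 1 / k) - ω / k₁ ^ 2 / (1 / (ω ^ 2 * k₁) - 1 / k) := by
  set w := ω with hwdef
  have hw : w ^ 3 = 1 := omega_cube
  have hw0 : w ≠ 0 := omega_ne_zero
  have d1 : w ^ 2 * k₁ - k ≠ 0 := sub_ne_zero.mpr hA
  have d2 : 1 - w ^ 2 * k₁ * k ≠ 0 := fun h => hB (by linear_combination -h)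
  have d3 : w ^ 2 * k₁ * k - 1 ≠ 0 := sub_ne_zero.mpr hB
  have d4 : k - w ^ 2 * k₁ ≠ 0 := sub_ne_zero.mpr (Ne.symm hA)
  have e2 : 1 / (w ^ 2 * k₁) - k = (1 - w ^ 2 * k₁ * k) / (w ^ 2 * k₁) := by
    field_simp
  have e3 : w ^ 2 * k₁ - 1 / k = (w ^ 2 * k₁ * k - 1) / k := by field_simp
  have e4 : 1 / (w ^ 2 * k₁) - 1 / k = (k - w ^ 2 * k₁) / (w ^ 2 * k₁ * k) := by
    field_simp
  rw [e2, e3, e4]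
  rw [div_div_eq_mul_div, div_div_eq_mul_div, div_div_eq_mul_div]
  field_simp
  linear_combination (k₁ * k - k₁ * k ^ 3 - k₁ ^ 2 * w ^ 2 + k₁ ^ 2 * w ^ 2 * k ^ 4 +
    k₁ ^ 3 * w ^ 4 * k - k₁ ^ 3 * w ^ 4 * k ^ 3) * hw

lemma Fker_symm (x₀ T : ℝ) (f₁ : ℂ → ℂ) (x t : ℝ) (k k₁ : ℂ) (hk : k ≠ 0) (hk1 : k₁ ≠ 0)
    (hA : ω ^ 2 * k₁ ≠ k) (hB : ω ^ 2 * k₁ * k ≠ 1) :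
    Fker x₀ T f₁ x t k k₁ = Fker x₀ T f₁ x t (1 / k) k₁ := by
  unfold Fker
  rw [key_identity k k₁ hk hk1 hA hB]

lemma notS_ne_zero {k : ℂ} (hk : k ∉ Sset) : k ≠ 0 := fun h => hk (h ▸ zero_mem_Sset)

lemma hyp_e₁ {k : ℂ} (hk : k ∉ Sset) {r : ℝ} (hr : 1 < r) :
    ω ^ 2 * ((r : ℂ) * e₁) ≠ k ∧ ω ^ 2 * ((r : ℂ) * e₁) * k ≠ 1 := by
  have hrc : (r : ℂ) ≠ 0 := by
    simp only [ne_eq, Complex.ofReal_eq_zero]; linarith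
  have heq : ω ^ 2 * ((r : ℂ) * e₁) = (r : ℂ) * e₄ := by
    rw [← omega_sq_mul_e₁]; ring
  constructor
  · intro h
    exact hk (h ▸ heq ▸ Sgen_subset_Sset (Or.inl (Or.inl (Or.inr ⟨r, hr, heq.symm ▸ rfl⟩))))
  · intro h
    rw [heq] at h
    have hkval : k = ((r⁻¹ : ℝ) : ℂ) * e₂ := by
      have h1 : ((r : ℂ) * e₄) * (((r⁻¹ : ℝ) : ℂ) * e₂) = 1 := by
        push_cast
        field_simp
        linear_combination e₄_mul_e₂
      have h4 : (r : ℂ) * e₄ ≠ 0 := mul_ne_zero hrc (Complex.exp_ne_zero _)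
      exact mul_left_cancel₀ h4 (h.trans h1.symm)
    refine hk (hkval ▸ Sgen_subset_Sset (Or.inl (Or.inr ⟨r⁻¹, ?_, ?_, rfl⟩)))
    · exact inv_pos.mpr (by linarith)
    · exact inv_lt_one_of_one_lt₀ hr
  
lemma hyp_e₂ {k : ℂ} (hk : k ∉ Sset) {r : ℝ} (hr : 1 < r) :
    ω ^ 2 * ((r : ℂ) * e₂) ≠ k ∧ ω ^ 2 * ((r : ℂ) * e₂) * k ≠ 1 := by
  have hrc : (r : ℂ) ≠ 0 := by
    simp only [ne_eq, Complex.ofReal_eq_zero]; linarith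
  have heq : ω ^ 2 * ((r : ℂ) * e₂) = (r : ℂ) * e₃ := by
    rw [← omega_sq_mul_e₂]; ring
  constructor
  · intro h
    exact hk (h ▸ heq ▸ Sgen_subset_Sset (Or.inl (Or.inl (Or.inl ⟨r, hr, heq.symm ▸ rfl⟩))))
  · intro h
    rw [heq] at h
    have hkval : k = ((r⁻¹ : ℝ) : ℂ) * e₁ := by
      have h1 : ((r : ℂ) * e₃) * (((r⁻¹ : ℝ) : ℂ) * e₁) = 1 := by
        push_cast
        field_simp
        linear_combination e₃_mul_e₁
      have h4 : (r : ℂ) * e₃ ≠ 0 := mul_ne_zero hrc (Complex.exp_ne_zero _)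
      exact mul_left_cancel₀ h4 (h.trans h1.symm)
    refine hk (hkval ▸ Sgen_subset_Sset (Or.inr ⟨r⁻¹, ?_, ?_, rfl⟩))
    · exact inv_pos.mpr (by linarith)
    · exact inv_lt_one_of_one_lt₀ hr

lemma contourInt_symm (x₀ T : ℝ) (f₁ : ℂ → ℂ) (x t : ℝ) (k : ℂ) (hk : k ∉ Sset)
    (g : ℂ → ℂ) :
    (contourInt fun k₁ => Fker x₀ T f₁ x t k k₁ * g k₁)
      = contourInt fun k₁ => Fker x₀ T f₁ x t (1 / k) k₁ * g k₁ := by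
  have hk0 : k ≠ 0 := notS_ne_zero hk
  unfold contourInt
  congr 1
  · congr 1
    apply MeasureTheory.setIntegral_congr_fun measurableSet_Ioi
    intro r hr
    have hr' : (1 : ℝ) < r := hr
    have h1 : (r : ℂ) * e₁ ≠ 0 := mul_ne_zero
      (by simp only [ne_eq, Complex.ofReal_eq_zero]; linarith) e₁_ne_zero
    show Fker x₀ T f₁ x t k ((r : ℂ) * e₁) * g ((r : ℂ) * e₁)
      = Fker x₀ T f₁ x t (1 / k) ((r : ℂ) * e₁) * g ((r : ℂ) * e₁)
    rw [Fker_symm x₀ T f₁ x t k _ hk0 h1 (hyp_e₁ hk hr').1 (hyp_e₁ hk hr').2]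
  · congr 1
    apply MeasureTheory.setIntegral_congr_fun measurableSet_Ioi
    intro r hr
    have hr' : (1 : ℝ) < r := hr
    have h1 : (r : ℂ) * e₂ ≠ 0 := mul_ne_zero
      (by simp only [ne_eq, Complex.ofReal_eq_zero]; linarith) e₂_ne_zero
    show Fker x₀ T f₁ x t k ((r : ℂ) * e₂) * g ((r : ℂ) * e₂)
      = Fker x₀ T f₁ x t (1 / k) ((r : ℂ) * e₂) * g ((r : ℂ) * e₂)
    rw [Fker_symm x₀ T f₁ x t k _ hk0 h1 (hyp_e₂ hk hr').1 (hyp_e₂ hk hr').2]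

end Paper

open Paper

/-- Proposition 4.1 (d): the symmetry `m(x,t,k) = m(x,t,1/k)` for `k ∈ ℂ ∖ S`. -/
theorem statement_5 (x₀ T M : ℝ) (hT : 0 < T) (hM : 2 ≤ M) (f₁ : ℂ → ℂ)
    (hsmooth : ContDiffOn ℝ (⊤ : ℕ∞) (fun y : ℝ => f₁ (Complex.I * (y : ℂ))) (Set.Ioo (0 : ℝ) 1))
    (hvanish : ∀ y ∈ Set.Icc (1 / 2 : ℝ) 1, f₁ (Complex.I * (y : ℂ)) = 0)
    (hL1 : IntegrableOn (fun y : ℝ => ‖f₁ (Complex.I / (y : ℂ))‖ / y) (Set.Ioi 1))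
    (hL1le : ∫ y in Set.Ioi (1 : ℝ), ‖f₁ (Complex.I / (y : ℂ))‖ / y ≤ 1 / M)
    (x t : ℝ) (ht : t ∈ Set.Icc (0 : ℝ) T) (k : ℂ) (hk : k ∉ Sset) :
    mFun x₀ T f₁ x t k = mFun x₀ T f₁ x t (1 / k) := by
  unfold mFun
  congr 1
  apply tsum_congr
  intro j
  show mSeq (Fker x₀ T f₁ x t) (j + 1) k = mSeq (Fker x₀ T f₁ x t) (j + 1) (1 / k)
  simp only [mSeq]
  exact contourInt_symm x₀ T f₁ x t k hk _
end
end

section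
/- For all x ∈ ℝ and t ∈ [0,T], one has ∫_{Γ̃} sup_{s ∈ Γ̃_m} |F(x,t,s,k₁)| |dk₁| ≤ 1/M, where |dk₁| denotes arclength measure on Γ̃. -/
open MeasureTheory Filter Topology

noncomputable section

open Paper

section Helpers
open Complex

private lemma h3 : Real.sqrt 3 * Real.sqrt 3 = 3 := Real.mul_self_sqrt (by norm_num)

private lemma exp_real_mul_I (r : ℝ) : Complex.exp (↑r * I) = ↑(Real.cos r) + ↑(Real.sin r) * I := by
  rw [Complex.exp_mul_I, Complex.ofReal_cos, Complex.ofReal_sin]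

private lemma omega_eq : Paper.ω = ↑(-1/2 : ℝ) + ↑(Real.sqrt 3/2 : ℝ) * I := by
  have h : (2 * (Real.pi:ℂ) * I / 3) = ↑(2*Real.pi/3) * I := by push_cast; ring
  rw [Paper.ω, h, exp_real_mul_I]
  have h1 : 2*Real.pi/3 = Real.pi - Real.pi/3 := by ring
  rw [h1, Real.cos_pi_sub, Real.sin_pi_sub, Real.cos_pi_div_three, Real.sin_pi_div_three]
  norm_num

private lemma e1_eq : Paper.e₁ = ↑(Real.sqrt 3/2 : ℝ) + ↑(-1/2 : ℝ) * I := by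
  have h : (-((Real.pi:ℂ) / 6) * I) = ↑(-(Real.pi/6)) * I := by push_cast; ring
  rw [Paper.e₁, h, exp_real_mul_I, Real.cos_neg, Real.sin_neg, Real.cos_pi_div_six,
    Real.sin_pi_div_six]
  norm_num

private lemma e2_eq : Paper.e₂ = ↑(-Real.sqrt 3/2 : ℝ) + ↑(1/2 : ℝ) * I := by
  have h : (5 * (Real.pi:ℂ) / 6 * I) = ↑(5*Real.pi/6) * I := by push_cast; ring
  have h1 : 5*Real.pi/6 = Real.pi - Real.pi/6 := by ring
  rw [Paper.e₂, h, h1, exp_real_mul_I, Real.cos_pi_sub, Real.sin_pi_sub, Real.cos_pi_div_six,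
    Real.sin_pi_div_six]
  push_cast; ring

private lemma norm_e1 : ‖Paper.e₁‖ = 1 := by
  rw [Paper.e₁, Complex.norm_exp]
  simp [Complex.mul_re]

private lemma norm_e2 : ‖Paper.e₂‖ = 1 := by
  rw [Paper.e₂, Complex.norm_exp]
  simp [Complex.mul_re]

private lemma norm_omega : ‖Paper.ω‖ = 1 := by
  rw [Paper.ω, Complex.norm_exp]
  have h : (2 * (Real.pi:ℂ) * I / 3) = ↑(2*Real.pi/3) * I := by push_cast; ring
  rw [h]; simp [Complex.mul_re]

private lemma omega_mul_e1 : Paper.ω * Paper.e₁ = I := by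
  rw [omega_eq, e1_eq]
  rw [Complex.ext_iff]
  constructor <;> simp [Complex.mul_re, Complex.mul_im] <;> nlinarith [h3]

private lemma omega_mul_e2 : Paper.ω * Paper.e₂ = -I := by
  rw [omega_eq, e2_eq]
  rw [Complex.ext_iff]
  constructor <;> simp [Complex.mul_re, Complex.mul_im] <;> nlinarith [h3]

private lemma omega2_mul_e1 : Paper.ω^2 * Paper.e₁ = ↑(-Real.sqrt 3/2 : ℝ) + ↑(-1/2 : ℝ) * I := by
  rw [omega_eq, e1_eq, Complex.ext_iff]
  constructor
  · simp [Complex.mul_re, Complex.mul_im, pow_two]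
    linear_combination (-Real.sqrt 3/8) * h3
  · simp [Complex.mul_re, Complex.mul_im, pow_two]
    linear_combination (-1/8 : ℝ) * h3

private lemma omega2_mul_e2 : Paper.ω^2 * Paper.e₂ = ↑(Real.sqrt 3/2 : ℝ) + ↑(1/2 : ℝ) * I := by
  rw [omega_eq, e2_eq, Complex.ext_iff]
  constructor
  · simp [Complex.mul_re, Complex.mul_im, pow_two]
    linear_combination (Real.sqrt 3/8) * h3
  · simp [Complex.mul_re, Complex.mul_im, pow_two]
    linear_combination (1/8 : ℝ) * h3

private lemma conj_omega_sq : Paper.ω^2 * (starRingEnd ℂ) (Paper.ω^2) = 1 := by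
  rw [Complex.mul_conj]
  have : Complex.normSq (Paper.ω^2) = 1 := by
    rw [Complex.normSq_eq_norm_sq, norm_pow, norm_omega]; norm_num
  rw [this]; norm_num

private lemma rtilde_bound (ρ : ℝ) : ‖Paper.rtilde (↑ρ * I)‖ ≤ 1 := by
  have hk2 : ((ρ:ℂ) * I)^2 = -(ρ:ℂ)^2 := by
    rw [mul_pow, Complex.I_sq]; ring
  have hr : Paper.rtilde (↑ρ * I) = (Paper.ω^2 + (ρ:ℂ)^2) / (1 + Paper.ω^2 * (ρ:ℂ)^2) := by
    rw [Paper.rtilde, hk2]; ring_nf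
  have hden : 1 + Paper.ω^2 * (ρ:ℂ)^2 = Paper.ω^2 * (starRingEnd ℂ) (Paper.ω^2 + (ρ:ℂ)^2) := by
    rw [map_add, mul_add, conj_omega_sq]
    simp [← Complex.ofReal_pow, Complex.conj_ofReal]
  rw [hr, hden, norm_div, norm_mul, norm_pow, norm_omega]
  rw [RCLike.norm_conj]
  simp only [one_pow, one_mul]
  exact div_self_le_one _

private lemma one_div_neg_mul_I (ρ : ℝ) (hρ : ρ ≠ 0) : (1:ℂ) / (↑ρ * -I) = I / ↑ρ := by
  have hρ' : (ρ:ℂ) ≠ 0 := Complex.ofReal_ne_zero.mpr hρ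
  rw [div_eq_div_iff (by simp [hρ', Complex.I_ne_zero]) hρ']
  linear_combination (ρ:ℂ) * Complex.I_sq

private lemma ftilde_pos (f₁ : ℂ → ℂ) (ρ : ℝ) (hρ : 0 < ρ) :
    Paper.ftilde0 f₁ (↑ρ * I) = Paper.rtilde (↑ρ * I) * (starRingEnd ℂ) (f₁ (I / ↑ρ)) := by
  rw [Paper.ftilde0, if_pos (by simpa using hρ)]
  rw [map_mul, Complex.conj_ofReal, Complex.conj_I, one_div_neg_mul_I ρ hρ.ne']

private lemma ftilde_neg (f₁ : ℂ → ℂ) (ρ : ℝ) (hρ : 0 < ρ) :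
    Paper.ftilde0 f₁ (↑(-ρ) * I) = f₁ (I / ↑ρ) := by
  rw [Paper.ftilde0, if_neg (by simp; nlinarith)]
  have h : (↑(-ρ) : ℂ) * I = ↑ρ * -I := by push_cast; ring
  rw [h, one_div_neg_mul_I ρ hρ.ne']

private lemma normSq_lb (ρ σ a b a' b' : ℝ) (hρ : 0 ≤ ρ) (hσ : 0 ≤ σ)
    (hu : a*a + b*b = 1) (hv : a'*a' + b'*b' = 1) (hre : a*a' + b*b' ≤ 1/2) :
    ρ^2 + σ^2 - ρ*σ ≤ Complex.normSq ((ρ:ℂ) * (↑a + ↑b*I) - ↑σ * (↑a' + ↑b'*I)) := by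
  have h : ((ρ:ℂ) * (↑a + ↑b*I) - ↑σ * (↑a' + ↑b'*I)) = ↑(ρ*a - σ*a') + ↑(ρ*b - σ*b')*I := by
    push_cast; ring
  rw [h, Complex.normSq_add_mul_I]
  nlinarith [mul_nonneg hρ hσ]

private lemma dist_lb' (ρ σ a b a' b' : ℝ) (hρ : 2 ≤ ρ) (hσ : 2 < σ)
    (hu : a*a + b*b = 1) (hv : a'*a' + b'*b' = 1) (hre : a*a' + b*b' ≤ 1/2) :
    5/6*ρ ≤ ‖(ρ:ℂ) * (↑a + ↑b*I) - ↑σ * (↑a' + ↑b'*I)‖ := by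
  have h1 := normSq_lb ρ σ a b a' b' (by linarith) (by linarith) hu hv hre
  rw [Complex.normSq_eq_norm_sq] at h1
  have h2 : (5/6*ρ)^2 ≤ ‖(ρ:ℂ) * (↑a + ↑b*I) - ↑σ * (↑a' + ↑b'*I)‖^2 := by
    nlinarith [sq_nonneg (σ - ρ/2)]
  exact le_of_pow_le_pow_left₀ two_ne_zero (norm_nonneg _) h2

private lemma dist_lb (ρ σ : ℝ) (hρ : 2 ≤ ρ) (hσ : 2 < σ) (e f : ℂ)
    (he : e = Paper.e₁ ∨ e = Paper.e₂) (hf : f = Paper.e₁ ∨ f = Paper.e₂) :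
    5/6*ρ ≤ ‖Paper.ω^2 * ((ρ:ℂ) * e) - ↑σ * f‖ := by
  have key : ∀ g : ℂ, Paper.ω^2 * ((ρ:ℂ) * g) = (ρ:ℂ) * (Paper.ω^2 * g) := fun g => by ring
  rcases he with rfl | rfl <;> rcases hf with rfl | rfl
  · rw [key, omega2_mul_e1, e1_eq]
    exact dist_lb' ρ σ _ _ _ _ hρ hσ (by linarith [h3]) (by linarith [h3]) (by linarith [h3])
  · rw [key, omega2_mul_e1, e2_eq]
    exact dist_lb' ρ σ _ _ _ _ hρ hσ (by linarith [h3]) (by linarith [h3]) (by linarith [h3])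
  · rw [key, omega2_mul_e2, e1_eq]
    exact dist_lb' ρ σ _ _ _ _ hρ hσ (by linarith [h3]) (by linarith [h3]) (by linarith [h3])
  · rw [key, omega2_mul_e2, e2_eq]
    exact dist_lb' ρ σ _ _ _ _ hρ hσ (by linarith [h3]) (by linarith [h3]) (by linarith [h3])


private lemma key_bound (x₀ T : ℝ) (f₁ : ℂ → ℂ) (x t : ℝ) (ht : t ∈ Set.Icc (0:ℝ) T)
    (hvanish : ∀ y ∈ Set.Icc (1 / 2 : ℝ) 1, f₁ (Complex.I * (y : ℂ)) = 0)
    (ρ : ℝ) (hρ : 1 < ρ) (e : ℂ) (he : e = Paper.e₁ ∨ e = Paper.e₂)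
    (s : ℂ) (hs : s ∈ Paper.GammatM) :
    ‖Paper.Fker x₀ T f₁ x t s ((ρ:ℂ) * e)‖ ≤ 1/4 * (‖f₁ (Complex.I / (ρ:ℂ))‖ / ρ) := by
  have hρ0 : (0:ℝ) < ρ := by linarith
  obtain ⟨η, hηor, hωk⟩ : ∃ η : ℝ, (η = ρ ∨ η = -ρ) ∧ Paper.ω * ((ρ:ℂ) * e) = (η:ℂ) * I := by
    rcases he with rfl | rfl
    · exact ⟨ρ, Or.inl rfl, by
        rw [show Paper.ω * ((ρ:ℂ) * Paper.e₁) = (ρ:ℂ) * (Paper.ω * Paper.e₁) from by ring,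
          omega_mul_e1]⟩
    · refine ⟨-ρ, Or.inr rfl, ?_⟩
      rw [show Paper.ω * ((ρ:ℂ) * Paper.e₂) = (ρ:ℂ) * (Paper.ω * Paper.e₂) from by ring,
        omega_mul_e2]
      push_cast; ring
  have hηne : η ≠ 0 := by rcases hηor with rfl | rfl <;> intro h <;> linarith
  have hηC : (η:ℂ) ≠ 0 := Complex.ofReal_ne_zero.mpr hηne
  obtain ⟨σ, f, hσ, hf, rfl⟩ : ∃ σ : ℝ, ∃ f : ℂ, 2 < σ ∧ (f = Paper.e₁ ∨ f = Paper.e₂) ∧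
      s = (σ:ℂ) * f := by
    obtain ⟨hmem, habs⟩ := hs
    simp only [Set.mem_setOf_eq] at habs
    rcases hmem with ⟨r, hr, rfl⟩ | ⟨r, hr, rfl⟩
    · refine ⟨r, Paper.e₁, ?_, Or.inl rfl, rfl⟩
      rwa [norm_mul, Complex.norm_real, Real.norm_eq_abs, abs_of_pos (by linarith),
        norm_e1, mul_one] at habs
    · refine ⟨r, Paper.e₂, ?_, Or.inr rfl, rfl⟩
      rwa [norm_mul, Complex.norm_real, Real.norm_eq_abs, abs_of_pos (by linarith),
        norm_e2, mul_one] at habs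
  have hπ := Real.pi_pos
  have h2pi : ‖2 * (Real.pi:ℂ) * I‖ = 2 * Real.pi := by
    rw [norm_mul, norm_mul, Complex.norm_I, Complex.norm_real, Real.norm_eq_abs, abs_of_pos hπ,
      mul_one]; norm_num
  have hnorme : ‖e‖ = 1 := by rcases he with rfl | rfl; exacts [norm_e1, norm_e2]
  have hnormf : ‖f‖ = 1 := by rcases hf with rfl | rfl; exacts [norm_e1, norm_e2]
  have hk1 : ‖(ρ:ℂ) * e‖ = ρ := by
    rw [norm_mul, Complex.norm_real, hnorme, mul_one, Real.norm_eq_abs, abs_of_pos hρ0]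
  have hE1 : ‖Complex.exp (((x - x₀ : ℝ):ℂ) / 2 * ((η:ℂ) * I))‖ ≤ 1 := by
    have harg : ((x - x₀ : ℝ):ℂ) / 2 * ((η:ℂ) * I) = (((x - x₀)/2*η : ℝ):ℂ) * I := by
      push_cast; ring
    rw [harg, Complex.norm_exp]
    simp [Complex.mul_re]
  have hI2 : ((η:ℂ) * I)^2 = ↑(-η^2) := by push_cast; linear_combination (η:ℂ)^2 * Complex.I_sq
  have hE2 : ‖Complex.exp (((T - t : ℝ):ℂ) / 4 * ((η:ℂ) * I)^2)‖ ≤ 1 := by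
    have harg : ((T - t : ℝ):ℂ) / 4 * ((η:ℂ) * I)^2 = (((T - t)/4 * (-η^2) : ℝ):ℂ) := by
      push_cast
      linear_combination (((T:ℂ) - (t:ℂ))/4 * (η:ℂ)^2) * Complex.I_sq
    rw [harg, Complex.norm_exp, Complex.ofReal_re, Real.exp_le_one_iff]
    nlinarith [sq_nonneg η, ht.2]
  have hinv : (1:ℂ) / ((η:ℂ) * I) = ((-(1/η) : ℝ):ℂ) * I := by
    rw [div_eq_iff (mul_ne_zero hηC Complex.I_ne_zero)]
    push_cast
    field_simp
    linear_combination Complex.I_sq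
  have hE3 : ‖Complex.exp (-((x:ℂ) / 2) * (1 / ((η:ℂ) * I)) + (t:ℂ) / 4 *
      (1 / ((η:ℂ) * I))^2)‖ ≤ 1 := by
    have harg : -((x:ℂ) / 2) * (1 / ((η:ℂ) * I)) + (t:ℂ) / 4 * (1 / ((η:ℂ) * I))^2
        = ((x/(2*η) : ℝ):ℂ) * I + ((-(t/(4*η^2)) : ℝ):ℂ) := by
      rw [hinv]; push_cast
      linear_combination ((t:ℂ)/(4*(η:ℂ)^2)) * Complex.I_sq
    rw [harg, Complex.norm_exp, Real.exp_le_one_iff]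
    have h5 : ((((x/(2*η) : ℝ):ℂ) * I) + ((-(t/(4*η^2)) : ℝ):ℂ)).re = -(t/(4*η^2)) := by
      simp only [Complex.add_re, Complex.mul_re, Complex.ofReal_re, Complex.ofReal_im,
        Complex.I_re, Complex.I_im]
      ring
    rw [h5]
    have h6 : (0:ℝ) ≤ t/(4*η^2) := div_nonneg ht.1 (by positivity)
    linarith
  have hft : ‖Paper.ftilde0 f₁ ((η:ℂ) * I)‖ ≤ ‖f₁ (I / (ρ:ℂ))‖ := by
    rcases hηor with h | h
    · rw [h, ftilde_pos f₁ ρ hρ0, norm_mul, RCLike.norm_conj]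
      exact mul_le_of_le_one_left (norm_nonneg _) (rtilde_bound ρ)
    · rw [h]
      exact le_of_eq (by rw [ftilde_neg f₁ ρ hρ0])
  unfold Paper.Fker
  rw [hωk]
  rcases le_or_gt 2 ρ with h2ρ | h2ρ
  · -- main case : ρ ≥ 2
    have hD1 : 5/6*ρ ≤ ‖Paper.ω^2 * ((ρ:ℂ) * e) - (σ:ℂ) * f‖ := dist_lb ρ σ h2ρ hσ e f he hf
    have hD1pos : (0:ℝ) < ‖Paper.ω^2 * ((ρ:ℂ) * e) - (σ:ℂ) * f‖ := lt_of_lt_of_le (by positivity) hD1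
    have hD2 : (3/2:ℝ) ≤ ‖1 / (Paper.ω^2 * ((ρ:ℂ) * e)) - (σ:ℂ) * f‖ := by
      have h1 : ‖(σ:ℂ) * f‖ = σ := by
        rw [norm_mul, Complex.norm_real, hnormf, mul_one, Real.norm_eq_abs,
          abs_of_pos (by linarith)]
      have h2 : ‖(1:ℂ) / (Paper.ω^2 * ((ρ:ℂ) * e))‖ = 1/ρ := by
        rw [norm_div, norm_one, norm_mul, norm_pow, norm_omega, one_pow, one_mul, hk1]
      have h3 := norm_sub_norm_le ((σ:ℂ) * f) (1 / (Paper.ω^2 * ((ρ:ℂ) * e)))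
      rw [norm_sub_rev] at h3
      have h4 : 1/ρ ≤ 1/2 := by rw [div_le_div_iff₀ hρ0 (by norm_num)]; linarith
      rw [h1, h2] at h3
      linarith
    have hD2pos : (0:ℝ) < ‖1 / (Paper.ω^2 * ((ρ:ℂ) * e)) - (σ:ℂ) * f‖ := by linarith
    have hR : ‖Paper.ω^2 / (Paper.ω^2 * ((ρ:ℂ) * e) - (σ:ℂ) * f) -
        Paper.ω / ((ρ:ℂ) * e)^2 / (1 / (Paper.ω^2 * ((ρ:ℂ) * e)) - (σ:ℂ) * f)‖
        ≤ 23/(15*ρ) := by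
      have e1 : ‖Paper.ω^2 / (Paper.ω^2 * ((ρ:ℂ) * e) - (σ:ℂ) * f)‖ ≤ 6/(5*ρ) := by
        rw [norm_div, norm_pow, norm_omega, one_pow]
        calc 1 / ‖Paper.ω^2 * ((ρ:ℂ) * e) - (σ:ℂ) * f‖ ≤ 1 / (5/6*ρ) :=
              one_div_le_one_div_of_le (by positivity) hD1
          _ = 6/(5*ρ) := by ring
      have e2 : ‖Paper.ω / ((ρ:ℂ) * e)^2 / (1 / (Paper.ω^2 * ((ρ:ℂ) * e)) - (σ:ℂ) * f)‖
          ≤ 1/(3*ρ) := by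
        rw [norm_div, norm_div, norm_omega, norm_pow, hk1]
        have hx : (1:ℝ)/ρ^2 ≤ 1/(2*ρ) := by
          rw [div_le_div_iff₀ (by positivity) (by positivity)]; nlinarith
        calc (1/ρ^2) / ‖1 / (Paper.ω^2 * ((ρ:ℂ) * e)) - (σ:ℂ) * f‖
            ≤ (1/(2*ρ)) / (3/2) := div_le_div₀ (by positivity) hx (by norm_num) hD2
          _ = 1/(3*ρ) := by ring
      calc ‖Paper.ω^2 / (Paper.ω^2 * ((ρ:ℂ) * e) - (σ:ℂ) * f) -
            Paper.ω / ((ρ:ℂ) * e)^2 / (1 / (Paper.ω^2 * ((ρ:ℂ) * e)) - (σ:ℂ) * f)‖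
          ≤ ‖Paper.ω^2 / (Paper.ω^2 * ((ρ:ℂ) * e) - (σ:ℂ) * f)‖ +
            ‖Paper.ω / ((ρ:ℂ) * e)^2 / (1 / (Paper.ω^2 * ((ρ:ℂ) * e)) - (σ:ℂ) * f)‖ :=
            norm_sub_le _ _
        _ ≤ 6/(5*ρ) + 1/(3*ρ) := add_le_add e1 e2
        _ = 23/(15*ρ) := by ring
    have hπ2 : Real.pi > 3.14 := by
      have := Real.pi_gt_d6; linarith
    have hF0 := norm_nonneg (f₁ (I / (ρ:ℂ)))
    calc ‖Complex.exp (((x - x₀ : ℝ):ℂ) / 2 * ((η:ℂ) * I)) *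
          Complex.exp (((T - t : ℝ):ℂ) / 4 * ((η:ℂ) * I)^2) *
          (Paper.ω^2 / (Paper.ω^2 * ((ρ:ℂ) * e) - (σ:ℂ) * f) -
            Paper.ω / ((ρ:ℂ) * e)^2 / (1 / (Paper.ω^2 * ((ρ:ℂ) * e)) - (σ:ℂ) * f)) *
          (Paper.ftilde0 f₁ ((η:ℂ) * I) *
            Complex.exp (-((x:ℂ) / 2) * (1 / ((η:ℂ) * I)) + (t:ℂ) / 4 * (1 / ((η:ℂ) * I))^2) /
            (2 * (Real.pi:ℂ) * I))‖
        = ‖Complex.exp (((x - x₀ : ℝ):ℂ) / 2 * ((η:ℂ) * I))‖ *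
          ‖Complex.exp (((T - t : ℝ):ℂ) / 4 * ((η:ℂ) * I)^2)‖ *
          ‖Paper.ω^2 / (Paper.ω^2 * ((ρ:ℂ) * e) - (σ:ℂ) * f) -
            Paper.ω / ((ρ:ℂ) * e)^2 / (1 / (Paper.ω^2 * ((ρ:ℂ) * e)) - (σ:ℂ) * f)‖ *
          (‖Paper.ftilde0 f₁ ((η:ℂ) * I)‖ *
            ‖Complex.exp (-((x:ℂ) / 2) * (1 / ((η:ℂ) * I)) + (t:ℂ) / 4 * (1 / ((η:ℂ) * I))^2)‖ /
            (2 * Real.pi)) := by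
          rw [norm_mul, norm_mul, norm_mul, norm_div, norm_mul, h2pi]
      _ ≤ 1 * 1 * (23/(15*ρ)) * (‖f₁ (I / (ρ:ℂ))‖ * 1 / (2 * Real.pi)) := by
          gcongr
      _ ≤ 1/4 * (‖f₁ (I / (ρ:ℂ))‖ / ρ) := by
          rw [show (1:ℝ) * 1 * (23/(15*ρ)) * (‖f₁ (I / (ρ:ℂ))‖ * 1 / (2 * Real.pi))
              = 23 * ‖f₁ (I / (ρ:ℂ))‖ / (30 * Real.pi * ρ) from by ring,
            show (1:ℝ)/4 * (‖f₁ (I / (ρ:ℂ))‖ / ρ) = ‖f₁ (I / (ρ:ℂ))‖ / (4*ρ) from by ring,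
            div_le_div_iff₀ (by positivity) (by positivity)]
          nlinarith [mul_nonneg hF0 hρ0.le]
  · -- case ρ < 2 : the datum vanishes
    have hf0 : f₁ (I / (ρ:ℂ)) = 0 := by
      have h := hvanish (1/ρ) ⟨by rw [le_div_iff₀ hρ0]; linarith, by rw [div_le_one hρ0]; linarith⟩
      rwa [show Complex.I * ((1/ρ : ℝ):ℂ) = Complex.I / (ρ:ℂ) from by push_cast; ring] at h
    have hft0 : Paper.ftilde0 f₁ ((η:ℂ) * I) = 0 := by
      rw [hf0, norm_zero] at hft
      exact norm_le_zero_iff.mp hft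
    rw [hft0, hf0]
    simp

end Helpers


/-- Inequality (4.19): `∫_{Γ̃} sup_{s ∈ Γ̃_m} |F(x,t,s,k₁)| |dk₁| ≤ 1/M`, where the arclength
integral over `Γ̃` is the sum of the integrals over its two rays. -/
theorem statement_7 (x₀ T M : ℝ) (hT : 0 < T) (hM : 2 ≤ M) (f₁ : ℂ → ℂ)
    (hsmooth : ContDiffOn ℝ (⊤ : ℕ∞) (fun y : ℝ => f₁ (Complex.I * (y : ℂ))) (Set.Ioo (0 : ℝ) 1))
    (hvanish : ∀ y ∈ Set.Icc (1 / 2 : ℝ) 1, f₁ (Complex.I * (y : ℂ)) = 0)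
    (hL1 : IntegrableOn (fun y : ℝ => ‖f₁ (Complex.I / (y : ℂ))‖ / y) (Set.Ioi 1))
    (hL1le : ∫ y in Set.Ioi (1 : ℝ), ‖f₁ (Complex.I / (y : ℂ))‖ / y ≤ 1 / M)
    (x t : ℝ) (ht : t ∈ Set.Icc (0 : ℝ) T) :
    (∫ ρ in Set.Ioi (1 : ℝ), ⨆ s ∈ GammatM, ‖Fker x₀ T f₁ x t s ((ρ : ℂ) * e₁)‖) +
      (∫ ρ in Set.Ioi (1 : ℝ), ⨆ s ∈ GammatM, ‖Fker x₀ T f₁ x t s ((ρ : ℂ) * e₂)‖) ≤ 1 / M := by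
  have hM0 : (0:ℝ) < M := by linarith
  have hMnn : (0:ℝ) ≤ 1 / M := by positivity
  have hint : ∀ e : ℂ, e = e₁ ∨ e = e₂ →
      (∫ ρ in Set.Ioi (1 : ℝ), ⨆ s ∈ GammatM, ‖Fker x₀ T f₁ x t s ((ρ : ℂ) * e)‖)
        ≤ 1/4 * (1 / M) := by
    intro e he
    have h1 : (∫ ρ in Set.Ioi (1 : ℝ), ⨆ s ∈ GammatM, ‖Fker x₀ T f₁ x t s ((ρ : ℂ) * e)‖)
        ≤ ∫ ρ in Set.Ioi (1 : ℝ), 1/4 * (‖f₁ (Complex.I / (ρ:ℂ))‖ / ρ) := by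
      apply integral_mono_of_nonneg
      · exact Filter.Eventually.of_forall fun ρ =>
          Real.iSup_nonneg fun s => Real.iSup_nonneg fun _ => norm_nonneg _
      · exact hL1.const_mul (1/4)
      · filter_upwards [self_mem_ae_restrict measurableSet_Ioi] with ρ hρ
        have hb : (0:ℝ) ≤ 1/4 * (‖f₁ (Complex.I / (ρ:ℂ))‖ / ρ) := by
          have : (0:ℝ) < ρ := lt_trans one_pos hρ
          positivity
        exact Real.iSup_le
          (fun s => Real.iSup_le (fun hs => key_bound x₀ T f₁ x t ht hvanish ρ hρ e he s hs) hb)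
          hb
    have h2 : (∫ ρ in Set.Ioi (1 : ℝ), 1/4 * (‖f₁ (Complex.I / (ρ:ℂ))‖ / ρ))
        = 1/4 * ∫ ρ in Set.Ioi (1 : ℝ), ‖f₁ (Complex.I / (ρ:ℂ))‖ / ρ := by
      exact integral_const_mul _ _
    calc (∫ ρ in Set.Ioi (1 : ℝ), ⨆ s ∈ GammatM, ‖Fker x₀ T f₁ x t s ((ρ : ℂ) * e)‖)
        ≤ 1/4 * ∫ ρ in Set.Ioi (1 : ℝ), ‖f₁ (Complex.I / (ρ:ℂ))‖ / ρ := h2 ▸ h1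
      _ ≤ 1/4 * (1/M) := by
          apply mul_le_mul_of_nonneg_left hL1le (by norm_num)
  have hadd1 := hint e₁ (Or.inl rfl)
  have hadd2 := hint e₂ (Or.inr rfl)
  linarith
end
end

section
/- For every j ∈ ℕ_{>0}, every x ∈ ℝ and every t ∈ [0,T], one has sup_{k ∈ Γ̃_m} |m_j(x,t,k)| ≤ M^{-j}. -/
open MeasureTheory Filter Topology

noncomputable section

open Paper


namespace Aux
open Complex Paper

lemma s3 : Real.sqrt 3 ^ 2 = 3 := Real.sq_sqrt (by norm_num)

lemma omega_eq : ω = (↑(-(1/2):ℝ) + ↑(Real.sqrt 3/2)*I : ℂ) := by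
  rw [ω, show (2 * (Real.pi:ℂ) * I / 3) = ((Real.pi - Real.pi/3 : ℝ):ℂ) * I by push_cast; ring,
    Complex.exp_mul_I, ← Complex.ofReal_cos, ← Complex.ofReal_sin,
    Real.cos_pi_sub, Real.cos_pi_div_three, Real.sin_pi_sub, Real.sin_pi_div_three]

lemma e1_eq : e₁ = (↑(Real.sqrt 3/2) + ↑(-(1/2):ℝ)*I : ℂ) := by
  rw [e₁, show (-((Real.pi:ℂ)/6) * I) = ((-(Real.pi/6) : ℝ):ℂ) * I by push_cast; ring,
    Complex.exp_mul_I, ← Complex.ofReal_cos, ← Complex.ofReal_sin,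
    Real.cos_neg, Real.sin_neg, Real.cos_pi_div_six, Real.sin_pi_div_six]

lemma e2_eq : e₂ = -e₁ := by
  rw [e₂, e₁, show (5 * (Real.pi:ℂ) / 6 * I) = -(↑Real.pi/6) * I + Real.pi * I by ring,
    Complex.exp_add, Complex.exp_pi_mul_I]
  ring

lemma normSq_e1 : Complex.normSq e₁ = 1 := by
  rw [e1_eq]; simp [Complex.normSq_apply]; nlinarith [s3]

lemma abs_e1 : ‖e₁‖ = 1 := by
  rw [Complex.norm_def, normSq_e1, Real.sqrt_one]

lemma abs_e2 : ‖e₂‖ = 1 := by rw [e2_eq, norm_neg, abs_e1]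

lemma omega_mul_e1 : ω * e₁ = I := by
  rw [omega_eq, e1_eq]
  apply Complex.ext <;> simp [Complex.mul_re, Complex.mul_im] <;> nlinarith [s3]

lemma omega_mul_e2 : ω * e₂ = -I := by rw [e2_eq, mul_neg, omega_mul_e1]

lemma omega_sq : ω^2 = (↑(-(1/2):ℝ) + ↑(-(Real.sqrt 3/2))*I : ℂ) := by
  rw [sq, omega_eq]
  apply Complex.ext <;> simp [Complex.mul_re, Complex.mul_im] <;> nlinarith [s3]

lemma abs_omega : ‖ω‖ = 1 := by
  have h : Complex.normSq ω = 1 := by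
    rw [omega_eq]; simp [Complex.normSq_apply]; nlinarith [s3]
  rw [Complex.norm_def, h, Real.sqrt_one]

lemma dist_bound (r ρ : ℝ) (hr : 0 ≤ r) {e e' : ℂ}
    (he : e = e₁ ∨ e = e₂) (he' : e' = e₁ ∨ e' = e₂) :
    Real.sqrt 3/2*r ≤ ‖ω^2*(↑r*e) - ↑ρ*e'‖ := by
  set z := ω^2*(↑r*e) - ↑ρ*e' with hz
  have key : (Real.sqrt 3/2*r)^2 ≤ Complex.normSq z := by
    rw [hz]
    rcases he with h|h <;> rcases he' with h'|h' <;> subst h <;> subst h' <;>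
      rw [omega_sq] <;> simp only [e2_eq, e1_eq] <;>
      simp [Complex.normSq_apply, Complex.mul_re, Complex.mul_im] <;>
      nlinarith [s3, sq_nonneg (ρ - r/2), sq_nonneg (ρ + r/2)]
  have h1 : 0 ≤ Real.sqrt 3/2*r := by positivity
  nlinarith [norm_nonneg z, Complex.sq_norm z]

lemma abs_rtilde_le (r : ℝ) (hr : 0 < r) : ‖rtilde ((r:ℂ) * I)‖ ≤ 1 := by
  have hsq : ((r:ℂ)*I)^2 = -(↑(r^2) : ℂ) := by
    rw [mul_pow, Complex.I_sq]; push_cast; ring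
  have hnum : Complex.normSq (ω^2 - ((r:ℂ)*I)^2) = r^4 - r^2 + 1 := by
    rw [hsq, omega_sq]; simp [Complex.normSq_apply, ← Complex.ofReal_pow]; nlinarith [s3]
  have hden : Complex.normSq (1 - ω^2 * ((r:ℂ)*I)^2) = r^4 - r^2 + 1 := by
    rw [hsq, omega_sq]; simp [Complex.normSq_apply, Complex.mul_re, Complex.mul_im, ← Complex.ofReal_pow]
    nlinarith [s3]
  have hpos : (0:ℝ) < r^4 - r^2 + 1 := by nlinarith [sq_nonneg (r^2 - 1)]
  rw [rtilde, norm_div, Complex.norm_def, Complex.norm_def, hnum, hden, div_self]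
  positivity

lemma inv_key2 (σ : ℝ) (hσ : σ ≠ 0) : (1:ℂ)/((σ:ℂ)*I) = ↑(-σ⁻¹)*I := by
  have h0 : (σ:ℂ) ≠ 0 := Complex.ofReal_ne_zero.mpr hσ
  field_simp
  rw [Complex.I_sq, Complex.ofReal_neg, Complex.ofReal_div, Complex.ofReal_one]
  field_simp

lemma inv_conj (r : ℝ) (hr : r ≠ 0) : (1:ℂ)/(starRingEnd ℂ ((r:ℂ)*I)) = I/(r:ℂ) := by
  have h0 : (r:ℂ) ≠ 0 := Complex.ofReal_ne_zero.mpr hr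
  rw [map_mul, Complex.conj_ofReal, Complex.conj_I]
  field_simp
  rw [Complex.I_sq]

lemma inv_neg_rI (r : ℝ) (hr : r ≠ 0) : (1:ℂ)/(-((r:ℂ)*I)) = I/(r:ℂ) := by
  have h0 : (r:ℂ) ≠ 0 := Complex.ofReal_ne_zero.mpr hr
  field_simp
  rw [Complex.I_sq]

lemma ftilde0_abs (f₁ : ℂ → ℂ) (r : ℝ) (hr : 0 < r) {e : ℂ} (he : e = e₁ ∨ e = e₂) :
    ‖ftilde0 f₁ (ω*((r:ℂ)*e))‖ ≤ ‖f₁ (I/(r:ℂ))‖ := by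
  rcases he with h|h <;> subst h
  · rw [show ω*((r:ℂ)*e₁) = (r:ℂ)*(ω*e₁) by ring, omega_mul_e1]
    rw [ftilde0, if_pos (by simp [hr] : (0:ℝ) < ((r:ℂ)*I).im)]
    rw [inv_conj r hr.ne', norm_mul, Complex.norm_conj]
    calc ‖rtilde ((r:ℂ)*I)‖ * ‖f₁ (I/(r:ℂ))‖
        ≤ 1 * ‖f₁ (I/(r:ℂ))‖ :=
          mul_le_mul_of_nonneg_right (abs_rtilde_le r hr) (norm_nonneg _)
      _ = _ := one_mul _
  · rw [show ω*((r:ℂ)*e₂) = (r:ℂ)*(ω*e₂) by ring, omega_mul_e2]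
    rw [show (r:ℂ)*(-I) = -((r:ℂ)*I) by ring]
    rw [ftilde0, if_neg (by simp [hr.le] : ¬ (0:ℝ) < (-((r:ℂ)*I)).im)]
    rw [inv_neg_rI r hr.ne']

lemma ftilde0_zero (f₁ : ℂ → ℂ) (r : ℝ) (hr : 0 < r) {e : ℂ} (he : e = e₁ ∨ e = e₂)
    (h0 : f₁ (I/(r:ℂ)) = 0) : ftilde0 f₁ (ω*((r:ℂ)*e)) = 0 := by
  have h := ftilde0_abs f₁ r hr he
  rw [h0, norm_zero] at h
  exact norm_eq_zero.mp (le_antisymm h (norm_nonneg _))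

lemma Fker_zero (x₀ T : ℝ) (f₁ : ℂ → ℂ)
    (hvanish : ∀ y ∈ Set.Icc (1 / 2 : ℝ) 1, f₁ (Complex.I * (y : ℂ)) = 0)
    (x t : ℝ) (k : ℂ) (r : ℝ) (hr1 : 1 < r) (hr2 : r ≤ 2) {e : ℂ} (he : e = e₁ ∨ e = e₂) :
    Fker x₀ T f₁ x t k ((r:ℂ)*e) = 0 := by
  have hr0 : 0 < r := by linarith
  have h0 : f₁ (I/(r:ℂ)) = 0 := by
    have h1 : (I/(r:ℂ)) = I * ((r⁻¹ : ℝ):ℂ) := by push_cast; ring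
    have hmem : r⁻¹ ∈ Set.Icc (1/2 : ℝ) 1 := by
      constructor
      · rw [inv_eq_one_div, le_div_iff₀ hr0]; linarith
      · rw [inv_eq_one_div, div_le_one hr0]; linarith
    rw [h1]
    exact hvanish r⁻¹ hmem
  rw [Fker, ftilde0_zero f₁ r hr0 he h0]
  ring

lemma abs_sub_le' (X Y : ℂ) : ‖X - Y‖ ≤ ‖X‖ + ‖Y‖ := by
  exact norm_sub_le X Y

lemma combine {A1 A2 AR Af A3 F r : ℝ} (hr : 2 ≤ r)
    (hA1 : A1 = 1) (hA2n : 0 ≤ A2) (hA2 : A2 ≤ 1)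
    (hARn : 0 ≤ AR) (hAR : AR ≤ 2/Real.sqrt 3*(1/r) + 2/3*(1/r^2))
    (hAfn : 0 ≤ Af) (hAf : Af ≤ F) (hA3n : 0 ≤ A3) (hA3 : A3 ≤ 1) (hFn : 0 ≤ F) :
    A1*A2*AR*(Af*A3/(2*Real.pi)) ≤ 1/2*(F/r) := by
  have hr0 : (0:ℝ) < r := by linarith
  have hs3 : (1:ℝ) ≤ Real.sqrt 3 := by nlinarith [s3, Real.sqrt_nonneg 3]
  have hπ := Real.pi_gt_three
  have hπ0 : (0:ℝ) < 2*Real.pi := by linarith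
  have e1 : A1*A2 ≤ 1 := by nlinarith
  have e2 : Af*A3 ≤ F := by nlinarith
  have hARb : AR ≤ (7/3)*(1/r) := by
    have h23 : 2/Real.sqrt 3 ≤ 2 := by
      rw [div_le_iff₀ (by linarith)]; nlinarith
    have hinv : 0 < 1/r := by positivity
    have h1 : 1/r^2 ≤ (1/2)*(1/r) := by
      rw [div_le_iff₀ (by positivity)]
      have h2 : (1/2)*(1/r)*r^2 = r/2 := by field_simp
      rw [h2]
      rw [le_div_iff₀ (by norm_num : (0:ℝ) < 2)]
      nlinarith
    nlinarith
  have step1 : A1*A2*AR*(Af*A3/(2*Real.pi)) ≤ 1*AR*(F/(2*Real.pi)) := by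
    refine mul_le_mul (mul_le_mul e1 le_rfl hARn (by norm_num))
      (div_le_div_of_nonneg_right e2 hπ0.le)
      (div_nonneg (mul_nonneg hAfn hA3n) hπ0.le) ?_
    have : 0 ≤ A1*A2 := by nlinarith
    nlinarith
  have step2 : 1*AR*(F/(2*Real.pi)) ≤ ((7/3)*(1/r))*(F/(2*Real.pi)) := by
    rw [one_mul]
    exact mul_le_mul_of_nonneg_right hARb (div_nonneg hFn hπ0.le)
  have step3 : ((7/3)*(1/r))*(F/(2*Real.pi)) = (7/3)/(2*Real.pi)*(F/r) := by ring
  have step4 : (7/3)/(2*Real.pi)*(F/r) ≤ 1/2*(F/r) := by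
    refine mul_le_mul_of_nonneg_right ?_ (div_nonneg hFn hr0.le)
    rw [div_le_div_iff₀ hπ0 (by norm_num : (0:ℝ) < 2)]
    linarith
  linarith [step1, step2, step3 ▸ step2, step4]

lemma Fker_bound (x₀ T : ℝ) (f₁ : ℂ → ℂ) (x t : ℝ) (ht0 : 0 ≤ t) (htT : t ≤ T)
    (k : ℂ) (ρ : ℝ) (hρ : 2 ≤ ρ) {e' : ℂ} (he' : e' = e₁ ∨ e' = e₂) (hk : k = (ρ:ℂ) * e')
    (r : ℝ) (hr : 2 ≤ r) {e : ℂ} (he : e = e₁ ∨ e = e₂) :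
    ‖Fker x₀ T f₁ x t k ((r:ℂ)*e)‖ ≤ 1/2 * (‖f₁ (I/(r:ℂ))‖ / r) := by
  have hr0 : (0:ℝ) < r := by linarith
  have hρ0 : (0:ℝ) < ρ := by linarith
  obtain ⟨σ, hσor, hσeq⟩ : ∃ σ:ℝ, (σ = r ∨ σ = -r) ∧ ω*((r:ℂ)*e) = (σ:ℂ)*I := by
    rcases he with h|h <;> subst h
    · exact ⟨r, Or.inl rfl, by rw [show ω*((r:ℂ)*e₁) = (r:ℂ)*(ω*e₁) by ring, omega_mul_e1]⟩
    · exact ⟨-r, Or.inr rfl, by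
        rw [show ω*((r:ℂ)*e₂) = (r:ℂ)*(ω*e₂) by ring, omega_mul_e2]; push_cast; ring⟩
  have hσ0 : σ ≠ 0 := by rcases hσor with h|h <;> subst h <;> intro hc <;> linarith
  have habs_e : ‖e‖ = 1 := by rcases he with h|h <;> subst h <;>
    [exact abs_e1; exact abs_e2]
  have habs_k₁ : ‖(r:ℂ)*e‖ = r := by
    rw [norm_mul, Complex.norm_real, habs_e, mul_one, Real.norm_eq_abs, abs_of_pos hr0]
  have hE1 : ‖Complex.exp (((x - x₀:ℝ):ℂ)/2 * (ω*((r:ℂ)*e)))‖ = 1 := by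
    rw [hσeq, show (((x - x₀:ℝ):ℂ)/2 * ((σ:ℂ)*I)) = (((x-x₀)/2*σ : ℝ):ℂ)*I by
      push_cast; ring]
    exact Complex.norm_exp_ofReal_mul_I _
  have hE2 : ‖Complex.exp (((T - t:ℝ):ℂ)/4 * (ω*((r:ℂ)*e))^2)‖ ≤ 1 := by
    rw [hσeq, show (((T - t:ℝ):ℂ)/4 * ((σ:ℂ)*I)^2) = ((-((T-t)/4*σ^2) : ℝ):ℂ) by
      rw [mul_pow, Complex.I_sq]; push_cast; ring]
    rw [Complex.norm_exp, Complex.ofReal_re]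
    refine Real.exp_le_one_iff.mpr ?_
    have h1 : 0 ≤ (T-t)/4*σ^2 := mul_nonneg (by linarith) (sq_nonneg σ)
    linarith
  have hE3 : ‖Complex.exp (-((x:ℂ)/2) * (1/(ω*((r:ℂ)*e)))
      + (t:ℂ)/4*(1/(ω*((r:ℂ)*e)))^2)‖ ≤ 1 := by
    have hσC : (σ:ℂ) ≠ 0 := Complex.ofReal_ne_zero.mpr hσ0
    rw [hσeq, inv_key2 σ hσ0, show (-((x:ℂ)/2) * ((((-σ⁻¹ : ℝ)):ℂ)*I)
        + (t:ℂ)/4*((((-σ⁻¹ : ℝ)):ℂ)*I)^2)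
        = ((-(t/(4*σ^2)) : ℝ):ℂ) + ((x/(2*σ) : ℝ):ℂ)*I by
      rw [mul_pow, Complex.I_sq]; push_cast; field_simp; ring]
    rw [Complex.norm_exp]
    rw [show (((-(t/(4*σ^2)) : ℝ):ℂ) + ((x/(2*σ) : ℝ):ℂ)*I).re = -(t/(4*σ^2)) by
      simp only [Complex.add_re, Complex.ofReal_re, Complex.mul_re, Complex.ofReal_im,
        Complex.I_re, Complex.I_im]
      ring]
    refine Real.exp_le_one_iff.mpr ?_
    have h1 : 0 ≤ t/(4*σ^2) := div_nonneg (by linarith) (by positivity)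
    linarith
  have hs3 : (1:ℝ) ≤ Real.sqrt 3 := by nlinarith [s3, Real.sqrt_nonneg 3]
  have hs3' : Real.sqrt 3 ≠ 0 := by linarith
  have hrne : r ≠ 0 := ne_of_gt hr0
  have hden1 : Real.sqrt 3/2*r ≤ ‖ω^2*((r:ℂ)*e) - k‖ := by
    rw [hk]; exact dist_bound r ρ hr0.le he he'
  have hden1pos : (0:ℝ) < Real.sqrt 3/2*r := by nlinarith
  have ht1 : ‖ω^2/(ω^2*((r:ℂ)*e) - k)‖ ≤ 2/Real.sqrt 3 * (1/r) := by
    rw [norm_div, norm_pow, abs_omega, one_pow]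
    calc 1/‖ω^2*((r:ℂ)*e) - k‖ ≤ 1/(Real.sqrt 3/2*r) :=
        one_div_le_one_div_of_le hden1pos hden1
      _ = 2/Real.sqrt 3 * (1/r) := by field_simp
  have habs_inv : ‖1/(ω^2*((r:ℂ)*e))‖ = 1/r := by
    rw [norm_div, norm_one, norm_mul, norm_pow, abs_omega, one_pow, one_mul, habs_k₁]
  have habs_k : ‖k‖ = ρ := by
    rw [hk, norm_mul, Complex.norm_real, Real.norm_eq_abs, abs_of_pos hρ0]
    rcases he' with h|h <;> subst h <;> simp [abs_e1, abs_e2]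
  have hden2 : (3:ℝ)/2 ≤ ‖1/(ω^2*((r:ℂ)*e)) - k‖ := by
    have h1 : ‖k‖ - ‖1/(ω^2*((r:ℂ)*e))‖ ≤ ‖k - 1/(ω^2*((r:ℂ)*e))‖ := norm_sub_norm_le _ _
    rw [norm_sub_rev] at h1
    rw [habs_k, habs_inv] at h1
    have h2 : 1/r ≤ 1/2 := by
      rw [div_le_div_iff₀ hr0 (by norm_num : (0:ℝ) < 2)]; linarith
    linarith
  have ht2 : ‖ω/((r:ℂ)*e)^2/(1/(ω^2*((r:ℂ)*e)) - k)‖ ≤ 2/3*(1/r^2) := by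
    rw [norm_div, norm_div, abs_omega, norm_pow, habs_k₁]
    calc (1:ℝ)/r^2/‖1/(ω^2*((r:ℂ)*e)) - k‖ ≤ (1/r^2)/(3/2) :=
        div_le_div_of_nonneg_left (by positivity) (by norm_num) hden2
      _ = 2/3*(1/r^2) := by ring
  have hR : ‖ω^2/(ω^2*((r:ℂ)*e) - k) - ω/((r:ℂ)*e)^2/(1/(ω^2*((r:ℂ)*e)) - k)‖
      ≤ 2/Real.sqrt 3*(1/r) + 2/3*(1/r^2) := by
    exact le_trans (abs_sub_le' _ _) (add_le_add ht1 ht2)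
  have hft : ‖ftilde0 f₁ (ω*((r:ℂ)*e))‖ ≤ ‖f₁ (I/(r:ℂ))‖ :=
    ftilde0_abs f₁ r hr0 he
  have h2pi : ‖2*(Real.pi:ℂ)*I‖ = 2*Real.pi := by
    rw [norm_mul, norm_mul, Complex.norm_I, Complex.norm_two, Complex.norm_real, Real.norm_eq_abs,
      abs_of_pos Real.pi_pos, mul_one]
  rw [Fker, norm_mul, norm_mul, norm_mul, norm_div, norm_mul, h2pi]
  exact combine hr hE1 (norm_nonneg _) hE2 (norm_nonneg _) hR
    (norm_nonneg _) hft (norm_nonneg _) hE3 (norm_nonneg _)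

lemma Gammat_cases {k : ℂ} (h : k ∈ Gammat) :
    ∃ ρ : ℝ, 1 < ρ ∧ ∃ e', (e' = e₁ ∨ e' = e₂) ∧ k = (ρ:ℂ) * e' := by
  rcases h with ⟨ρ, hρ, hke⟩ | ⟨ρ, hρ, hke⟩
  · exact ⟨ρ, hρ, e₁, Or.inl rfl, hke⟩
  · exact ⟨ρ, hρ, e₂, Or.inr rfl, hke⟩

lemma mem_GammatM {r : ℝ} (hr : 2 < r) {e : ℂ} (he : e = e₁ ∨ e = e₂) :
    ((r:ℂ) * e) ∈ GammatM := by
  have hr0 : (0:ℝ) < r := by linarith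
  constructor
  · rcases he with h|h <;> subst h
    · exact Or.inl ⟨r, by linarith, rfl⟩
    · exact Or.inr ⟨r, by linarith, rfl⟩
  · have habs_e : ‖e‖ = 1 := by rcases he with h|h <;> subst h <;>
      [exact abs_e1; exact abs_e2]
    have : ‖(r:ℂ)*e‖ = r := by
      rw [norm_mul, Complex.norm_real, habs_e, mul_one, Real.norm_eq_abs, abs_of_pos hr0]
    simpa [Set.mem_setOf_eq, this, habs_e, abs_of_pos hr0] using hr

lemma main_induction (x₀ T M : ℝ) (hM : 2 ≤ M) (f₁ : ℂ → ℂ)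
    (hvanish : ∀ y ∈ Set.Icc (1 / 2 : ℝ) 1, f₁ (Complex.I * (y : ℂ)) = 0)
    (hL1 : MeasureTheory.IntegrableOn
      (fun y : ℝ => ‖f₁ (Complex.I / (y : ℂ))‖ / y) (Set.Ioi 1))
    (hL1le : ∫ y in Set.Ioi (1 : ℝ), ‖f₁ (Complex.I / (y : ℂ))‖ / y ≤ 1 / M)
    (x t : ℝ) (ht : t ∈ Set.Icc (0 : ℝ) T) :
    ∀ j : ℕ, ∀ k ∈ GammatM, ‖mSeq (Fker x₀ T f₁ x t) j k‖ ≤ (1/M) ^ j := by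
  have hM0 : (0:ℝ) < M := by linarith
  obtain ⟨ht0, htT⟩ := ht
  intro j
  induction j with
  | zero => intro k _; simp [mSeq]
  | succ n ih =>
    intro k hk
    obtain ⟨hkΓ, hkabs⟩ := hk
    obtain ⟨ρ, hρ1, e', he', hke⟩ := Gammat_cases hkΓ
    have hρ0 : (0:ℝ) < ρ := by linarith
    have habs_e' : ‖e'‖ = 1 := by rcases he' with h|h <;> subst h <;>
      [exact abs_e1; exact abs_e2]
    have habs_k : ‖k‖ = ρ := by
      rw [hke, norm_mul, Complex.norm_real, habs_e', mul_one, Real.norm_eq_abs, abs_of_pos hρ0]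
    have hρ2 : 2 < ρ := by
      have : 2 < ‖k‖ := hkabs
      rwa [habs_k] at this
    set c : ℝ := (1/2) * (1/M)^n with hc
    have hcnn : 0 ≤ c := by positivity
    set S : ℝ := ∫ y in Set.Ioi (1:ℝ), ‖f₁ (Complex.I / (y : ℂ))‖ / y with hS
    have key : ∀ (e : ℂ), (e = e₁ ∨ e = e₂) →
        ‖∫ r in Set.Ioi (1:ℝ),
          (Fker x₀ T f₁ x t k ((r:ℂ)*e) * mSeq (Fker x₀ T f₁ x t) n ((r:ℂ)*e))‖
        ≤ c * S := by
      intro e he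
      refine le_trans (MeasureTheory.norm_integral_le_integral_norm _) ?_
      have hbint : MeasureTheory.Integrable
          (fun y : ℝ => c * (‖f₁ (Complex.I / (y : ℂ))‖ / y))
          (MeasureTheory.volume.restrict (Set.Ioi 1)) := hL1.const_mul c
      have hptw : ∀ r ∈ Set.Ioi (1:ℝ),
          ‖Fker x₀ T f₁ x t k ((r:ℂ)*e) * mSeq (Fker x₀ T f₁ x t) n ((r:ℂ)*e)‖
          ≤ c * (‖f₁ (Complex.I / (r : ℂ))‖ / r) := by
        intro r hr
        have hr1 : (1:ℝ) < r := hr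
        have hr0 : (0:ℝ) < r := by linarith
        have hrhs : 0 ≤ c * (‖f₁ (Complex.I / (r : ℂ))‖ / r) :=
          mul_nonneg hcnn (div_nonneg (norm_nonneg _) hr0.le)
        by_cases h2 : r ≤ 2
        · rw [norm_mul, Fker_zero x₀ T f₁ hvanish x t k r hr1 h2 he, norm_zero, zero_mul]
          exact hrhs
        · push_neg at h2
          have hmem : ((r:ℂ)*e) ∈ GammatM := mem_GammatM h2 he
          rw [norm_mul]
          have hFb := Fker_bound x₀ T f₁ x t ht0 htT k ρ hρ2.le he' hke r h2.le he
          calc ‖Fker x₀ T f₁ x t k ((r:ℂ)*e)‖ * ‖mSeq (Fker x₀ T f₁ x t) n ((r:ℂ)*e)‖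
              ≤ (1/2 * (‖f₁ (Complex.I/(r:ℂ))‖/r)) * (1/M)^n := by
                refine mul_le_mul hFb (ih _ hmem) (norm_nonneg _) ?_
                positivity
            _ = c * (‖f₁ (Complex.I/(r:ℂ))‖/r) := by rw [hc]; ring
      refine le_trans (MeasureTheory.integral_mono_of_nonneg
        (Filter.Eventually.of_forall (fun r => norm_nonneg _)) hbint ?_) ?_
      · exact (MeasureTheory.ae_restrict_iff' measurableSet_Ioi).mpr
          (Filter.Eventually.of_forall hptw)
      · rw [MeasureTheory.integral_const_mul]
    have hunfold : mSeq (Fker x₀ T f₁ x t) (n+1) k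
        = (∫ r in Set.Ioi (1:ℝ),
            (Fker x₀ T f₁ x t k ((r:ℂ)*e₁) * mSeq (Fker x₀ T f₁ x t) n ((r:ℂ)*e₁))) * e₁
        + (∫ r in Set.Ioi (1:ℝ),
            (Fker x₀ T f₁ x t k ((r:ℂ)*e₂) * mSeq (Fker x₀ T f₁ x t) n ((r:ℂ)*e₂))) * e₂ := by
      rfl
    rw [hunfold]
    have hnorm_e₁ : ‖e₁‖ = 1 := by rw [abs_e1]
    have hnorm_e₂ : ‖e₂‖ = 1 := by rw [abs_e2]
    calc ‖_ + _‖ ≤ ‖(∫ r in Set.Ioi (1:ℝ),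
            (Fker x₀ T f₁ x t k ((r:ℂ)*e₁) * mSeq (Fker x₀ T f₁ x t) n ((r:ℂ)*e₁))) * e₁‖
        + ‖(∫ r in Set.Ioi (1:ℝ),
            (Fker x₀ T f₁ x t k ((r:ℂ)*e₂) * mSeq (Fker x₀ T f₁ x t) n ((r:ℂ)*e₂))) * e₂‖ :=
          norm_add_le _ _
      _ ≤ c * S + c * S := by
          rw [norm_mul, norm_mul, hnorm_e₁, hnorm_e₂, mul_one, mul_one]
          exact add_le_add (key e₁ (Or.inl rfl)) (key e₂ (Or.inr rfl))
      _ ≤ c * (1/M) + c * (1/M) :=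
          add_le_add (mul_le_mul_of_nonneg_left hL1le hcnn)
            (mul_le_mul_of_nonneg_left hL1le hcnn)
      _ = (1/M)^(n+1) := by rw [hc, pow_succ]; ring

end Aux

/-- Inequality (4.32): `sup_{k ∈ Γ̃_m} |m_j(x,t,k)| ≤ M^{-j}` for all `j ≥ 1`, `x ∈ ℝ` and
`t ∈ [0,T]`. -/
theorem statement_8 (x₀ T M : ℝ) (hT : 0 < T) (hM : 2 ≤ M) (f₁ : ℂ → ℂ)
    (hsmooth : ContDiffOn ℝ (⊤ : ℕ∞) (fun y : ℝ => f₁ (Complex.I * (y : ℂ))) (Set.Ioo (0 : ℝ) 1))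
    (hvanish : ∀ y ∈ Set.Icc (1 / 2 : ℝ) 1, f₁ (Complex.I * (y : ℂ)) = 0)
    (hL1 : IntegrableOn (fun y : ℝ => ‖f₁ (Complex.I / (y : ℂ))‖ / y) (Set.Ioi 1))
    (hL1le : ∫ y in Set.Ioi (1 : ℝ), ‖f₁ (Complex.I / (y : ℂ))‖ / y ≤ 1 / M)
    (j : ℕ) (hj : 1 ≤ j) (x t : ℝ) (ht : t ∈ Set.Icc (0 : ℝ) T)
    (k : ℂ) (hk : k ∈ GammatM) :
    ‖mSeq (Fker x₀ T f₁ x t) j k‖ ≤ M ^ (-(j : ℤ)) := by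
  have h := Aux.main_induction x₀ T M hM f₁ hvanish hL1 hL1le x t ht j k hk
  have hz : M ^ (-(j : ℤ)) = (1/M)^j := by
    rw [zpow_neg, zpow_natCast, one_div, inv_pow]
  rw [hz]
  exact h
end
end

section
/- For each x ∈ ℝ and t ∈ [0,T), the limit lim_{k→+∞, k ∈ (1,∞)} k·(m(x,t,k) - 1) exists and equals the absolutely convergent series Σ_{j=1}^∞ m_j^{(1)}(x,t). -/
open MeasureTheory Filter Topology

noncomputable section

open Paper
namespace Aux10

open Complex Paper MeasureTheory Filter Topology Set

noncomputable def s3 : ℝ := Real.sqrt 3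

lemma s3_nonneg : 0 ≤ s3 := Real.sqrt_nonneg 3

lemma s3_sq : (s3 : ℂ) ^ 2 = 3 := by
  have : s3 ^ 2 = (3:ℝ) := Real.sq_sqrt (by norm_num)
  norm_cast

lemma s3_sq_real : s3 ^ 2 = 3 := Real.sq_sqrt (by norm_num)

lemma s3_ge_one : 1 ≤ s3 := by
  rw [show (1:ℝ) = Real.sqrt 1 by simp, s3]
  exact Real.sqrt_le_sqrt (by norm_num)

lemma he1 : e₁ = ((s3 : ℂ) - I) / 2 := by
  rw [e₁, Complex.exp_mul_I, s3]
  have h1 : Complex.cos (-(Real.pi / 6)) = ((Real.sqrt 3 / 2 : ℝ) : ℂ) := by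
    rw [show (-(Real.pi / 6) : ℂ) = ((-(Real.pi/6) : ℝ) : ℂ) by push_cast; ring,
      ← Complex.ofReal_cos, Real.cos_neg, Real.cos_pi_div_six]
  have h2 : Complex.sin (-(Real.pi / 6)) = ((-(1/2) : ℝ) : ℂ) := by
    rw [show (-(Real.pi / 6) : ℂ) = ((-(Real.pi/6) : ℝ) : ℂ) by push_cast; ring,
      ← Complex.ofReal_sin, Real.sin_neg, Real.sin_pi_div_six]
  rw [h1, h2]; push_cast; ring

lemma he2 : e₂ = -e₁ := by
  rw [e₂, e₁,
    show (5 * (Real.pi:ℂ) / 6 * I) = (-(Real.pi/6) * I) + (Real.pi : ℂ) * I by push_cast; ring,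
    Complex.exp_add, Complex.exp_pi_mul_I]
  ring

lemma hw : ω = (-1 + (s3:ℂ) * I) / 2 := by
  rw [ω, show (2 * (Real.pi:ℂ) * I / 3) = ((2 * Real.pi / 3 : ℝ) : ℂ) * I by push_cast; ring,
    Complex.exp_mul_I, ← Complex.ofReal_cos, ← Complex.ofReal_sin,
    show (2 * Real.pi / 3) = Real.pi - Real.pi / 3 by ring,
    Real.cos_pi_sub, Real.sin_pi_sub, Real.cos_pi_div_three, Real.sin_pi_div_three, s3]
  push_cast; ring

lemma hw2 : ω ^ 2 = (-1 - (s3:ℂ) * I) / 2 := by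
  rw [hw]
  linear_combination (Complex.I^2/4) * s3_sq + (3/4) * Complex.I_sq

lemma hwe1 : ω * e₁ = I := by
  rw [hw, he1]
  linear_combination (Complex.I/4) * s3_sq - ((s3:ℂ)/4) * Complex.I_sq

lemma norm_e1 : ‖e₁‖ = 1 := by
  rw [e₁]; simp [Complex.norm_exp]

lemma norm_w : ‖ω‖ = 1 := by
  rw [ω]; simp only [Complex.norm_exp]
  norm_num [Complex.div_re, Complex.mul_re, Complex.normSq]

end Aux10
namespace Aux10
open Complex Paper MeasureTheory Filter Topology Set

lemma hw2e1 : ω^2 * e₁ = -(((s3:ℂ)+I)/2) := by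
  rw [hw2, he1]
  linear_combination (-Complex.I/4) * s3_sq + ((s3:ℂ)/4) * Complex.I_sq

lemma e1_ne : e₁ ≠ 0 := by rw [e₁]; exact Complex.exp_ne_zero _

lemma w_ne : ω ≠ 0 := by rw [ω]; exact Complex.exp_ne_zero _

variable {ε : ℂ} {r : ℝ}

lemma key1 (hε : ε = 1 ∨ ε = -1) : ω * ((r:ℂ) * (ε * e₁)) = ε * ((r:ℂ) * I) := by
  rcases hε with rfl | rfl <;> rw [← hwe1] <;> ring

lemma key2 (hε : ε = 1 ∨ ε = -1) : (ω * ((r:ℂ) * (ε * e₁)))^2 = -((r:ℂ)^2) := by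
  rw [key1 hε]
  rcases hε with rfl | rfl <;>
    linear_combination ((r:ℂ)^2) * Complex.I_sq

lemma key3 (hε : ε = 1 ∨ ε = -1) (hr : (r:ℝ) ≠ 0) : 1 / (ω * ((r:ℂ) * (ε * e₁))) = -ε * (I / (r:ℂ)) := by
  have hr' : (r:ℂ) ≠ 0 := Complex.ofReal_ne_zero.mpr hr
  rw [key1 hε]
  rcases hε with rfl | rfl
  · field_simp [Complex.I_ne_zero]
    linear_combination Complex.I_sq
  · field_simp [Complex.I_ne_zero]
    linear_combination (-1:ℂ) * Complex.I_sq

lemma key4 (hε : ε = 1 ∨ ε = -1) (hr : (r:ℝ) ≠ 0) : (1 / (ω * ((r:ℂ) * (ε * e₁))))^2 = -(1/(r:ℂ)^2) := by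
  rw [key3 hε hr]
  rcases hε with rfl | rfl <;> field_simp <;> rw [Complex.I_sq] <;> ring

lemma key5 (hε : ε = 1 ∨ ε = -1) : ω^2 * ((r:ℂ) * (ε * e₁)) = -ε * (r:ℂ) * (((s3:ℂ)+I)/2) := by
  have : ω^2 * ((r:ℂ) * (ε * e₁)) = (r:ℂ) * ε * (ω^2 * e₁) := by ring
  rw [this, hw2e1]; ring

lemma key6 (hε : ε = 1 ∨ ε = -1) (hr : (r:ℝ) ≠ 0) : 1 / (ω^2 * ((r:ℂ) * (ε * e₁))) = -ε * e₁ / (r:ℂ) := by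
  have hr' : (r:ℂ) ≠ 0 := Complex.ofReal_ne_zero.mpr hr
  have hz : ω^2 * ((r:ℂ) * (ε * e₁)) ≠ 0 := by
    apply mul_ne_zero (pow_ne_zero _ w_ne)
    apply mul_ne_zero hr'
    rcases hε with rfl | rfl <;> simpa using e1_ne
  have h1 : (1:ℂ)/(ω^2*e₁) = -e₁ := by
    rw [eq_comm, eq_div_iff (mul_ne_zero (pow_ne_zero _ w_ne) e1_ne), hw2, he1]
    linear_combination ((1 + (s3:ℂ)*Complex.I - 2*Complex.I^2)/8) * s3_sq + ((-5 + (s3:ℂ)*Complex.I)/8) * Complex.I_sq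
  have h2 : ω^2 * ((r:ℂ) * (ε * e₁)) = (ω^2*e₁) * (ε*(r:ℂ)) := by ring
  rw [h2, one_div, mul_inv, ← one_div (ω^2*e₁), h1]
  rcases hε with rfl | rfl <;> field_simp

lemma norm_eps (hε : ε = 1 ∨ ε = -1) : ‖ε‖ = 1 := by rcases hε with rfl | rfl <;> simp

lemma norm_k1 (hε : ε = 1 ∨ ε = -1) (hr : 0 ≤ r) : ‖(r:ℂ) * (ε * e₁)‖ = r := by
  rw [norm_mul, norm_mul, norm_eps hε, norm_e1, Complex.norm_real]
  simp [_root_.abs_of_nonneg hr]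

lemma k1_ne (hε : ε = 1 ∨ ε = -1) (hr : (r:ℝ) ≠ 0) : (r:ℂ) * (ε * e₁) ≠ 0 := by
  apply mul_ne_zero (Complex.ofReal_ne_zero.mpr hr)
  rcases hε with rfl | rfl <;> simpa using e1_ne

end Aux10
namespace Aux10
open Complex Paper MeasureTheory Filter Topology Set

lemma e1_re : e₁.re = s3/2 := by rw [he1]; simp
lemma e1_im : e₁.im = -(1/2) := by rw [he1]; simp; norm_num
lemma hw2_re : (ω^2).re = -(1/2) := by rw [hw2]; simp; norm_num
lemma hw2_im : (ω^2).im = -(s3/2) := by rw [hw2]; simp; ring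

variable {ε : ℂ} {r : ℝ} {f₁ : ℂ → ℂ}

lemma norm_expA (c : ℝ) (hε : ε = 1 ∨ ε = -1) :
    ‖Complex.exp ((c:ℂ)/2 * (ω * ((r:ℂ)*(ε*e₁))))‖ = 1 := by
  rw [key1 hε]
  rcases hε with rfl | rfl
  · rw [show ((c:ℂ)/2 * (1*((r:ℂ)*I))) = ((c*r/2 : ℝ):ℂ) * I by push_cast; ring,
      Complex.norm_exp_ofReal_mul_I]
  · rw [show ((c:ℂ)/2 * (-1*((r:ℂ)*I))) = ((-(c*r)/2 : ℝ):ℂ) * I by push_cast; ring,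
      Complex.norm_exp_ofReal_mul_I]

lemma norm_expB (c : ℝ) (hε : ε = 1 ∨ ε = -1) :
    ‖Complex.exp ((c:ℂ)/4 * (ω * ((r:ℂ)*(ε*e₁)))^2)‖ = Real.exp (-(c*r^2)/4) := by
  rw [key2 hε, show ((c:ℂ)/4 * -((r:ℂ)^2)) = ((-(c*r^2)/4 : ℝ):ℂ) by push_cast; ring,
    Complex.norm_exp_ofReal]

lemma norm_expC (x t : ℝ) (ht0 : 0 ≤ t) (hε : ε = 1 ∨ ε = -1) (hr : 0 < r) :
    ‖Complex.exp (-((x:ℂ)/2) * (1/(ω*((r:ℂ)*(ε*e₁)))) + (t:ℂ)/4 * (1/(ω*((r:ℂ)*(ε*e₁))))^2)‖ ≤ 1 := by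
  rw [key4 hε hr.ne', key3 hε hr.ne', Complex.norm_exp,
    Real.exp_le_one_iff]
  have hr' : (r:ℂ) ≠ 0 := Complex.ofReal_ne_zero.mpr hr.ne'
  have hb : (0:ℝ) ≤ t/(4*r^2) := by positivity
  rcases hε with rfl | rfl
  · rw [show (-((x:ℂ)/2) * (-(1:ℂ) * (I/(r:ℂ))) + (t:ℂ)/4 * -(1/(r:ℂ)^2)) =
        ((x/(2*r):ℝ):ℂ) * I + ((-(t/(4*r^2)):ℝ):ℂ) by push_cast; field_simp]
    simp only [Complex.add_re, Complex.ofReal_re, Complex.mul_re, Complex.I_re, Complex.I_im,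
      Complex.ofReal_im]
    linarith
  · rw [show (-((x:ℂ)/2) * (-(-1:ℂ) * (I/(r:ℂ))) + (t:ℂ)/4 * -(1/(r:ℂ)^2)) =
        ((-(x/(2*r)):ℝ):ℂ) * I + ((-(t/(4*r^2)):ℝ):ℂ) by push_cast; field_simp]
    simp only [Complex.add_re, Complex.ofReal_re, Complex.mul_re, Complex.I_re, Complex.I_im,
      Complex.ofReal_im]
    linarith

end Aux10
namespace Aux10
open Complex Paper MeasureTheory Filter Topology Set

variable {ε : ℂ} {r : ℝ} {f₁ : ℂ → ℂ}

lemma inv_negI (hr : (r:ℝ) ≠ 0) : (1:ℂ)/(-((r:ℂ)*I)) = I/(r:ℂ) := by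
  have hr' : (r:ℂ) ≠ 0 := Complex.ofReal_ne_zero.mpr hr
  field_simp
  linear_combination (-1:ℂ) * Complex.I_sq

lemma ftilde_plus (hr : 0 < r) :
    ftilde0 f₁ (ω * ((r:ℂ)*((1:ℂ)*e₁))) = rtilde ((r:ℂ)*I) * starRingEnd ℂ (f₁ (I/(r:ℂ))) := by
  rw [key1 (Or.inl rfl), one_mul]
  have him : (0:ℝ) < ((r:ℂ)*I).im := by simp [hr]
  rw [ftilde0, if_pos him]
  congr 2
  rw [show starRingEnd ℂ ((r:ℂ)*I) = -((r:ℂ)*I) by simp, inv_negI hr.ne']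

lemma ftilde_minus (hr : 0 < r) :
    ftilde0 f₁ (ω * ((r:ℂ)*((-1:ℂ)*e₁))) = f₁ (I/(r:ℂ)) := by
  rw [key1 (Or.inr rfl)]
  have h1 : (-1:ℂ) * ((r:ℂ)*I) = -((r:ℂ)*I) := by ring
  rw [h1]
  have him : ¬ (0:ℝ) < (-((r:ℂ)*I)).im := by simp; positivity
  rw [ftilde0, if_neg him, inv_negI hr.ne']

lemma norm_rtilde (hr : 1 < r) : ‖rtilde ((r:ℂ)*I)‖ = 1 := by
  have hk2 : ((r:ℂ)*I)^2 = -((r:ℂ)^2) := by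
    linear_combination ((r:ℂ)^2) * Complex.I_sq
  rw [rtilde, hk2,
    show ω^2 - -((r:ℂ)^2) = ω^2 + ((r^2:ℝ):ℂ) by push_cast; ring,
    show (1:ℂ) - ω^2 * -((r:ℂ)^2) = 1 + ω^2 * ((r^2:ℝ):ℂ) by push_cast; ring, norm_div]
  have hsq : Complex.normSq (ω^2 + ((r^2:ℝ):ℂ)) = Complex.normSq (1 + ω^2 * ((r^2:ℝ):ℂ)) := by
    simp only [Complex.normSq_apply, Complex.add_re, Complex.add_im, Complex.mul_re,
      Complex.mul_im, hw2_re, hw2_im, Complex.ofReal_re, Complex.ofReal_im,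
      Complex.one_re, Complex.one_im]
    linear_combination ((1 - r^2*r^2)/4) * s3_sq_real
  have hr4 : 1 ≤ r^2*r^2 := by nlinarith [sq_nonneg r, sq_nonneg (r-1), sq_nonneg (r+1), sq_nonneg (r^2-1)]
  have hpos : 0 < Complex.normSq (1 + ω^2 * ((r^2:ℝ):ℂ)) := by
    simp only [Complex.normSq_apply, Complex.add_re, Complex.add_im, Complex.mul_re,
      Complex.mul_im, hw2_re, hw2_im, Complex.ofReal_re, Complex.ofReal_im,
      Complex.one_re, Complex.one_im]
    nlinarith [s3_sq_real, sq_nonneg (1 - r^2/2), hr4]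
  have h1 : ‖ω^2 + ((r^2:ℝ):ℂ)‖ = ‖1 + ω^2 * ((r^2:ℝ):ℂ)‖ := by
    rw [Complex.norm_def, Complex.norm_def, hsq]
  have h2 : (0:ℝ) < ‖1 + ω^2 * ((r^2:ℝ):ℂ)‖ := by
    rw [Complex.norm_def]
    exact Real.sqrt_pos.mpr hpos
  rw [h1, div_self h2.ne']

lemma norm_ftilde (hε : ε = 1 ∨ ε = -1) (hr : 1 < r) :
    ‖ftilde0 f₁ (ω * ((r:ℂ)*(ε*e₁)))‖ = ‖f₁ (I/(r:ℂ))‖ := by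
  have hr0 : 0 < r := lt_trans one_pos hr
  rcases hε with rfl | rfl
  · rw [ftilde_plus hr0, norm_mul, norm_rtilde hr, one_mul, RCLike.norm_conj]
  · rw [ftilde_minus hr0]

end Aux10
namespace Aux10
open Complex Paper MeasureTheory Filter Topology Set

/-- Admissible spectral parameters: contour points, or real `k ≥ 2`. -/
def Adm (k : ℂ) : Prop :=
  (∃ ρ : ℝ, 1 < ρ ∧ (k = (ρ:ℂ) * ((1:ℂ) * e₁) ∨ k = (ρ:ℂ) * ((-1:ℂ) * e₁))) ∨
  (∃ ρ : ℝ, 2 ≤ ρ ∧ k = (ρ:ℂ))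

variable {ε : ℂ} {r ρ : ℝ} {k : ℂ} {f₁ : ℂ → ℂ}

lemma Adm_ray (hε : ε = 1 ∨ ε = -1) (hρ : 1 < ρ) : Adm ((ρ:ℂ)*(ε*e₁)) := by
  rcases hε with rfl | rfl
  · exact Or.inl ⟨ρ, hρ, Or.inl rfl⟩
  · exact Or.inl ⟨ρ, hρ, Or.inr rfl⟩

lemma norm_Adm (hk : Adm k) : 1 < ‖k‖ := by
  rcases hk with ⟨ρ, hρ, hk | hk⟩ | ⟨ρ, hρ, hk⟩ <;> subst hk
  · rw [norm_k1 (Or.inl rfl) (by linarith)]; exact hρ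
  · rw [norm_k1 (Or.inr rfl) (by linarith)]; exact hρ
  · rw [Complex.norm_real, Real.norm_eq_abs, _root_.abs_of_nonneg (by linarith)]; linarith

lemma habs_lower {a b c : ℝ} (hc : 0 ≤ c) (h : c^2 ≤ a^2 + b^2) :
    c ≤ ‖(a:ℂ) + (b:ℂ)*I‖ := by
  rw [Complex.norm_def, Complex.normSq_add_mul_I]
  have := Real.sqrt_le_sqrt h
  rwa [Real.sqrt_sq hc] at this

/-- First pole denominator lower bound. -/
lemma lb1 (hk : Adm k) (hε : ε = 1 ∨ ε = -1) (hr : 1 < r) :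
    r/2 ≤ ‖ω^2 * ((r:ℂ)*(ε*e₁)) - k‖ := by
  have hs : 1 ≤ s3 := s3_ge_one
  have h3 : s3^2 = 3 := s3_sq_real
  have hr0 : (0:ℝ) < r := by linarith
  rw [key5 hε]
  rcases hk with ⟨ρ, hρ, hk | hk⟩ | ⟨ρ, hρ, hk⟩ <;> subst hk <;> rcases hε with rfl | rfl <;>
    first
      | (rw [he1]
         first
         | (rw [show (-(1:ℂ)*(r:ℂ)*(((s3:ℂ)+I)/2) - (ρ:ℂ)*((1:ℂ)*(((s3:ℂ)-I)/2))) =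
               ((-((r+ρ)*s3/2) : ℝ):ℂ) + (((ρ-r)/2 : ℝ):ℂ)*I by push_cast; ring])
         | (rw [show (-(-1:ℂ)*(r:ℂ)*(((s3:ℂ)+I)/2) - (ρ:ℂ)*((1:ℂ)*(((s3:ℂ)-I)/2))) =
               (((r-ρ)*s3/2 : ℝ):ℂ) + (((r+ρ)/2 : ℝ):ℂ)*I by push_cast; ring])
         | (rw [show (-(1:ℂ)*(r:ℂ)*(((s3:ℂ)+I)/2) - (ρ:ℂ)*((-1:ℂ)*(((s3:ℂ)-I)/2))) =
               (((ρ-r)*s3/2 : ℝ):ℂ) + ((-((r+ρ)/2) : ℝ):ℂ)*I by push_cast; ring])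
         | (rw [show (-(-1:ℂ)*(r:ℂ)*(((s3:ℂ)+I)/2) - (ρ:ℂ)*((-1:ℂ)*(((s3:ℂ)-I)/2))) =
               (((r+ρ)*s3/2 : ℝ):ℂ) + (((r-ρ)/2 : ℝ):ℂ)*I by push_cast; ring]))
      | (rw [show (-(1:ℂ)*(r:ℂ)*(((s3:ℂ)+I)/2) - (ρ:ℂ)) =
            ((-(r*s3/2)-ρ : ℝ):ℂ) + ((-(r/2) : ℝ):ℂ)*I by push_cast; ring])
      | (rw [show (-(-1:ℂ)*(r:ℂ)*(((s3:ℂ)+I)/2) - (ρ:ℂ)) =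
            ((r*s3/2-ρ : ℝ):ℂ) + ((r/2 : ℝ):ℂ)*I by push_cast; ring])
  all_goals
    refine habs_lower (by positivity) ?_
  all_goals
    have hρ0 : (0:ℝ) < ρ := by linarith
    have hC : ((r+ρ)*s3)^2 = 3*(r+ρ)^2 := by
      calc ((r+ρ)*s3)^2 = s3^2*(r+ρ)^2 := by ring
        _ = 3*(r+ρ)^2 := by rw [h3]
    have hD : ((r-ρ)*s3)^2 = 3*(r-ρ)^2 := by
      calc ((r-ρ)*s3)^2 = s3^2*(r-ρ)^2 := by ring
        _ = 3*(r-ρ)^2 := by rw [h3]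
    have hA : (r*s3)^2 = 3*r^2 := by
      calc (r*s3)^2 = s3^2*r^2 := by ring
        _ = 3*r^2 := by rw [h3]
    nlinarith [hC, hD, hA, mul_pos hr0 hρ0, sq_nonneg (r+ρ), sq_nonneg (r-ρ),
      sq_nonneg (ρ-r), mul_pos (mul_pos hr0 hρ0) (lt_of_lt_of_le one_pos hs)]

/-- First pole denominator lower bound against real `k = ρ ≥ 2`. -/
lemma lb1' (hε : ε = 1 ∨ ε = -1) (hr : 1 < r) (hρ : 2 ≤ ρ) :
    ρ/2 ≤ ‖ω^2 * ((r:ℂ)*(ε*e₁)) - (ρ:ℂ)‖ := by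
  have hs : 1 ≤ s3 := s3_ge_one
  have h3 : s3^2 = 3 := s3_sq_real
  have hr0 : (0:ℝ) < r := by linarith
  have hρ0 : (0:ℝ) < ρ := by linarith
  have hA : (r*s3)^2 = 3*r^2 := by
    calc (r*s3)^2 = s3^2*r^2 := by ring
      _ = 3*r^2 := by rw [h3]
  have hB : (ρ*s3)^2 = 3*ρ^2 := by
    calc (ρ*s3)^2 = s3^2*ρ^2 := by ring
      _ = 3*ρ^2 := by rw [h3]
  rw [key5 hε]
  rcases hε with rfl | rfl
  · rw [show (-(1:ℂ)*(r:ℂ)*(((s3:ℂ)+I)/2) - (ρ:ℂ)) =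
        ((-(r*s3/2)-ρ : ℝ):ℂ) + ((-(r/2) : ℝ):ℂ)*I by push_cast; ring]
    refine habs_lower (by positivity) ?_
    nlinarith [hA, mul_pos (mul_pos hr0 hρ0) (lt_of_lt_of_le one_pos hs)]
  · rw [show (-(-1:ℂ)*(r:ℂ)*(((s3:ℂ)+I)/2) - (ρ:ℂ)) =
        ((r*s3/2-ρ : ℝ):ℂ) + ((r/2 : ℝ):ℂ)*I by push_cast; ring]
    refine habs_lower (by positivity) ?_
    nlinarith [hA, hB, sq_nonneg (r - s3*ρ/2)]

/-- Second pole denominator lower bound. -/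
lemma lb2 (hε : ε = 1 ∨ ε = -1) (hr : 1 < r) :
    ‖k‖ - 1/r ≤ ‖1/(ω^2*((r:ℂ)*(ε*e₁))) - k‖ := by
  have hr0 : (0:ℝ) < r := lt_trans one_pos hr
  rw [key6 hε hr0.ne']
  have h1 : ‖-ε * e₁ / (r:ℂ)‖ = 1/r := by
    rw [norm_div, norm_mul, norm_neg, norm_eps hε, norm_e1, Complex.norm_real,
      Real.norm_eq_abs, _root_.abs_of_pos hr0]
    norm_num
  calc ‖k‖ - 1/r ≤ ‖k - (-ε * e₁ / (r:ℂ))‖ := by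
        rw [← h1]; exact norm_sub_norm_le _ _
    _ = ‖-ε * e₁ / (r:ℂ) - k‖ := norm_sub_rev _ _

lemma den1_ne (hk : Adm k) (hε : ε = 1 ∨ ε = -1) (hr : 1 < r) :
    ω^2 * ((r:ℂ)*(ε*e₁)) - k ≠ 0 := by
  intro h
  have := lb1 hk hε hr
  rw [h, norm_zero] at this
  linarith

lemma den2_ne (hk : Adm k) (hε : ε = 1 ∨ ε = -1) (hr : 1 < r) :
    1/(ω^2*((r:ℂ)*(ε*e₁))) - k ≠ 0 := by
  intro h
  have h2 := lb2 (k := k) hε hr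
  rw [h, norm_zero] at h2
  have h3 := norm_Adm hk
  have hr1 : 1/r < 1 := by rw [div_lt_one (by linarith)]; linarith
  linarith

lemma f1_vanish (hvanish : ∀ y ∈ Set.Icc (1 / 2 : ℝ) 1, f₁ (Complex.I * (y : ℂ)) = 0)
    (hr1 : 1 < r) (hr2 : r ≤ 2) : f₁ (I/(r:ℂ)) = 0 := by
  have hr0 : (0:ℝ) < r := by linarith
  have h1 : I/(r:ℂ) = I * (((1/r : ℝ)):ℂ) := by
    push_cast
    rw [mul_one_div]
  rw [h1]
  exact hvanish (1/r) ⟨by rw [le_div_iff₀ hr0]; linarith, by rw [div_le_one hr0]; linarith⟩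

end Aux10
namespace Aux10
open Complex Paper MeasureTheory Filter Topology Set

/-- Integrable majorant profile. -/
noncomputable def gb (f₁ : ℂ → ℂ) (r : ℝ) : ℝ := ‖f₁ (I/(r:ℂ))‖ / r

variable {ε : ℂ} {r ρ x₀ T x t : ℝ} {k : ℂ} {f₁ : ℂ → ℂ}

lemma gb_nonneg (hr : 0 < r) : 0 ≤ gb f₁ r := by
  rw [gb]; positivity

lemma exp_decay {δ : ℝ} (hδ : 0 < δ) (hr : 1 ≤ r) :
    Real.exp (-(δ*r^2)/4) * r ≤ 4/δ := by
  have hr0 : (0:ℝ) < r := lt_of_lt_of_le one_pos hr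
  set u : ℝ := δ*r^2/4 with hu
  have hu0 : 0 < u := by positivity
  have hE := Real.exp_pos (-u)
  have h1 : u ≤ Real.exp u := by have := Real.add_one_le_exp u; linarith
  have key : u * Real.exp (-u) ≤ 1 := by
    have h2 := mul_le_mul_of_nonneg_right h1 hE.le
    rwa [← Real.exp_add, add_neg_cancel, Real.exp_zero] at h2
  have hrr : r ≤ r^2 := by nlinarith
  have hfact : 0 ≤ δ * Real.exp (-u) * (r^2 - r) := by
    have : (0:ℝ) ≤ r^2 - r := by linarith
    positivity
  rw [show (-(δ*r^2)/4 : ℝ) = -u by rw [hu]; ring, le_div_iff₀ hδ]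
  nlinarith [key, hfact]

lemma norm_w2 : ‖ω^2‖ = 1 := by rw [norm_pow, norm_w, one_pow]

lemma norm_k1sq (hε : ε = 1 ∨ ε = -1) (hr : 0 < r) : ‖((r:ℂ)*(ε*e₁))^2‖ = r^2 := by
  rw [norm_pow, norm_k1 hε hr.le]
  
end Aux10
namespace Aux10
open Complex Paper MeasureTheory Filter Topology Set

variable {ε : ℂ} {r ρ x₀ T x t : ℝ} {k : ℂ} {f₁ : ℂ → ℂ}

lemma norm_2piI : ‖2*(Real.pi:ℂ)*Complex.I‖ = 2*Real.pi := by
  rw [norm_mul, norm_mul, Complex.norm_I, Complex.norm_real, Real.norm_eq_abs,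
    _root_.abs_of_pos Real.pi_pos, mul_one]
  norm_num

lemma ftilde_zero (hvanish : ∀ y ∈ Set.Icc (1 / 2 : ℝ) 1, f₁ (Complex.I * (y : ℂ)) = 0)
    (hε : ε = 1 ∨ ε = -1) (hr1 : 1 < r) (hr2 : r ≤ 2) :
    ftilde0 f₁ (ω * ((r:ℂ)*(ε*e₁))) = 0 := by
  have hr0 : (0:ℝ) < r := by linarith
  rcases hε with rfl | rfl
  · rw [ftilde_plus hr0, f1_vanish hvanish hr1 hr2]
    simp
  · rw [ftilde_minus hr0, f1_vanish hvanish hr1 hr2]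

lemma Fker_zero (hvanish : ∀ y ∈ Set.Icc (1 / 2 : ℝ) 1, f₁ (Complex.I * (y : ℂ)) = 0)
    (hε : ε = 1 ∨ ε = -1) (hr1 : 1 < r) (hr2 : r ≤ 2) :
    Fker x₀ T f₁ x t k ((r:ℂ)*(ε*e₁)) = 0 := by
  rw [Fker, ftilde_zero hvanish hε hr1 hr2]
  simp

lemma F1ker_zero (hvanish : ∀ y ∈ Set.Icc (1 / 2 : ℝ) 1, f₁ (Complex.I * (y : ℂ)) = 0)
    (hε : ε = 1 ∨ ε = -1) (hr1 : 1 < r) (hr2 : r ≤ 2) :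
    F1ker x₀ T f₁ x t ((r:ℂ)*(ε*e₁)) = 0 := by
  rw [F1ker, ftilde_zero hvanish hε hr1 hr2]
  simp

lemma hd2_half (hk : Adm k) (hε : ε = 1 ∨ ε = -1) (hr : 2 ≤ r) :
    (1:ℝ)/2 ≤ ‖1/(ω^2*((r:ℂ)*(ε*e₁))) - k‖ := by
  have h1 := lb2 (k := k) hε (by linarith : 1 < r)
  have h2 := norm_Adm hk
  have h3 : 1/r ≤ 1/2 := by
    rw [div_le_div_iff₀ (by linarith) (by norm_num)]; linarith
  linarith

lemma pole_bound (hk : Adm k) (hε : ε = 1 ∨ ε = -1) (hr : 2 ≤ r) :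
    ‖ω^2/(ω^2*((r:ℂ)*(ε*e₁)) - k) - ω/((r:ℂ)*(ε*e₁))^2/(1/(ω^2*((r:ℂ)*(ε*e₁))) - k)‖
      ≤ 3/r := by
  have hr1 : (1:ℝ) < r := by linarith
  have hr0 : (0:ℝ) < r := by linarith
  have hd1 := lb1 hk hε hr1
  have hd2 := hd2_half hk hε hr
  have hd1p : (0:ℝ) < ‖ω^2*((r:ℂ)*(ε*e₁)) - k‖ := by linarith
  have hd2p : (0:ℝ) < ‖1/(ω^2*((r:ℂ)*(ε*e₁))) - k‖ := by linarith
  calc ‖ω^2/(ω^2*((r:ℂ)*(ε*e₁)) - k) - ω/((r:ℂ)*(ε*e₁))^2/(1/(ω^2*((r:ℂ)*(ε*e₁))) - k)‖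
      ≤ ‖ω^2/(ω^2*((r:ℂ)*(ε*e₁)) - k)‖ + ‖ω/((r:ℂ)*(ε*e₁))^2/(1/(ω^2*((r:ℂ)*(ε*e₁))) - k)‖ :=
        norm_sub_le _ _
    _ = 1/‖ω^2*((r:ℂ)*(ε*e₁)) - k‖ + (1/r^2)/‖1/(ω^2*((r:ℂ)*(ε*e₁))) - k‖ := by
        rw [norm_div, norm_div, norm_div, norm_w2, norm_w, norm_k1sq hε hr0]
    _ ≤ 1/(r/2) + (1/r^2)/(1/2) := by gcongr
    _ ≤ 3/r := by
        have h1 : 1/(r/2) = 2/r := by field_simp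
        have h2 : (1/r^2)/(1/2 : ℝ) = 2/r^2 := by field_simp
        have h3 : 2/r^2 ≤ 1/r := by
          rw [div_le_div_iff₀ (by positivity) hr0]; nlinarith
        rw [h1, h2, show (3:ℝ)/r = 2/r + 1/r by ring]
        linarith

lemma Fker_bound (hvanish : ∀ y ∈ Set.Icc (1 / 2 : ℝ) 1, f₁ (Complex.I * (y : ℂ)) = 0)
    (hk : Adm k) (hε : ε = 1 ∨ ε = -1) (hr : 1 < r) (ht0 : 0 ≤ t) (htT : t < T) :
    ‖Fker x₀ T f₁ x t k ((r:ℂ)*(ε*e₁))‖ ≤ (3/(2*Real.pi)) * gb f₁ r := by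
  have hr0 : (0:ℝ) < r := by linarith
  rcases le_or_gt r 2 with h2 | h2
  · rw [Fker_zero hvanish hε hr h2, norm_zero]
    exact mul_nonneg (by positivity) (gb_nonneg hr0)
  · have hA : ‖Complex.exp (((x - x₀ : ℝ):ℂ)/2 * (ω*((r:ℂ)*(ε*e₁))))‖ = 1 := norm_expA _ hε
    have hB : ‖Complex.exp (((T - t : ℝ):ℂ)/4 * (ω*((r:ℂ)*(ε*e₁)))^2)‖ ≤ 1 := by
      rw [norm_expB _ hε, Real.exp_le_one_iff]
      nlinarith
    have hC := pole_bound hk hε h2.le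
    have hD : ‖ftilde0 f₁ (ω*((r:ℂ)*(ε*e₁))) *
        Complex.exp (-((x:ℂ)/2) * (1/(ω*((r:ℂ)*(ε*e₁)))) +
          (t:ℂ)/4 * (1/(ω*((r:ℂ)*(ε*e₁))))^2) / (2*(Real.pi:ℂ)*Complex.I)‖
        ≤ ‖f₁ (I/(r:ℂ))‖ / (2*Real.pi) := by
      rw [norm_div, norm_mul, norm_2piI, norm_ftilde hε hr]
      have := norm_expC (ε := ε) x t ht0 hε hr0
      calc ‖f₁ (I/(r:ℂ))‖ * ‖Complex.exp (-((x:ℂ)/2) * (1/(ω*((r:ℂ)*(ε*e₁)))) +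
            (t:ℂ)/4 * (1/(ω*((r:ℂ)*(ε*e₁))))^2)‖ / (2*Real.pi)
          ≤ ‖f₁ (I/(r:ℂ))‖ * 1 / (2*Real.pi) := by gcongr
        _ = ‖f₁ (I/(r:ℂ))‖ / (2*Real.pi) := by rw [mul_one]
    calc ‖Fker x₀ T f₁ x t k ((r:ℂ)*(ε*e₁))‖
        = ‖Complex.exp (((x - x₀ : ℝ):ℂ)/2 * (ω*((r:ℂ)*(ε*e₁))))‖ *
          ‖Complex.exp (((T - t : ℝ):ℂ)/4 * (ω*((r:ℂ)*(ε*e₁)))^2)‖ *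
          ‖ω^2/(ω^2*((r:ℂ)*(ε*e₁)) - k) - ω/((r:ℂ)*(ε*e₁))^2/(1/(ω^2*((r:ℂ)*(ε*e₁))) - k)‖ *
          ‖ftilde0 f₁ (ω*((r:ℂ)*(ε*e₁))) *
            Complex.exp (-((x:ℂ)/2) * (1/(ω*((r:ℂ)*(ε*e₁)))) +
              (t:ℂ)/4 * (1/(ω*((r:ℂ)*(ε*e₁))))^2) / (2*(Real.pi:ℂ)*Complex.I)‖ := by
          rw [Fker, norm_mul, norm_mul, norm_mul]
      _ ≤ 1 * 1 * (3/r) * (‖f₁ (I/(r:ℂ))‖ / (2*Real.pi)) := by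
          rw [hA]
          gcongr
      _ = (3/(2*Real.pi)) * gb f₁ r := by
          rw [gb]; ring
end Aux10
namespace Aux10
open Complex Paper MeasureTheory Filter Topology Set

variable {ε : ℂ} {r ρ x₀ T x t : ℝ} {k : ℂ} {f₁ : ℂ → ℂ}

lemma pole_bound' (hρ : 2 ≤ ρ) (hε : ε = 1 ∨ ε = -1) (hr : 2 ≤ r) :
    ρ * ‖ω^2/(ω^2*((r:ℂ)*(ε*e₁)) - (ρ:ℂ)) -
      ω/((r:ℂ)*(ε*e₁))^2/(1/(ω^2*((r:ℂ)*(ε*e₁))) - (ρ:ℂ))‖ ≤ 3 := by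
  have hr1 : (1:ℝ) < r := by linarith
  have hr0 : (0:ℝ) < r := by linarith
  have hρ0 : (0:ℝ) < ρ := by linarith
  have hkAdm : Adm ((ρ:ℂ)) := Or.inr ⟨ρ, hρ, rfl⟩
  have hd1 := lb1' hε hr1 hρ
  have hnρ : ‖((ρ:ℂ))‖ = ρ := by
    rw [Complex.norm_real, Real.norm_eq_abs, _root_.abs_of_pos hρ0]
  have hd2 : (3/4)*ρ ≤ ‖1/(ω^2*((r:ℂ)*(ε*e₁))) - (ρ:ℂ)‖ := by
    have h1 := lb2 (k := (ρ:ℂ)) hε hr1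
    rw [hnρ] at h1
    have h3 : 1/r ≤ 1/2 := by rw [div_le_div_iff₀ (by linarith) (by norm_num)]; linarith
    linarith
  have hd1p : (0:ℝ) < ‖ω^2*((r:ℂ)*(ε*e₁)) - (ρ:ℂ)‖ := by linarith
  have hd2p : (0:ℝ) < ‖1/(ω^2*((r:ℂ)*(ε*e₁))) - (ρ:ℂ)‖ := by linarith
  have step : ‖ω^2/(ω^2*((r:ℂ)*(ε*e₁)) - (ρ:ℂ)) -
      ω/((r:ℂ)*(ε*e₁))^2/(1/(ω^2*((r:ℂ)*(ε*e₁))) - (ρ:ℂ))‖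
      ≤ 1/(ρ/2) + (1/r^2)/((3/4)*ρ) := by
    calc ‖ω^2/(ω^2*((r:ℂ)*(ε*e₁)) - (ρ:ℂ)) -
        ω/((r:ℂ)*(ε*e₁))^2/(1/(ω^2*((r:ℂ)*(ε*e₁))) - (ρ:ℂ))‖
        ≤ ‖ω^2/(ω^2*((r:ℂ)*(ε*e₁)) - (ρ:ℂ))‖ +
          ‖ω/((r:ℂ)*(ε*e₁))^2/(1/(ω^2*((r:ℂ)*(ε*e₁))) - (ρ:ℂ))‖ := norm_sub_le _ _
      _ = 1/‖ω^2*((r:ℂ)*(ε*e₁)) - (ρ:ℂ)‖ +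
          (1/r^2)/‖1/(ω^2*((r:ℂ)*(ε*e₁))) - (ρ:ℂ)‖ := by
          rw [norm_div, norm_div, norm_div, norm_w2, norm_w, norm_k1sq hε hr0]
      _ ≤ 1/(ρ/2) + (1/r^2)/((3/4)*ρ) := by gcongr
  have hmul := mul_le_mul_of_nonneg_left step hρ0.le
  refine le_trans hmul ?_
  have e1 : ρ * (1/(ρ/2) + (1/r^2)/((3/4)*ρ)) = 2 + (4/3)*(1/r^2) := by
    field_simp
  rw [e1]
  have : (4/3)*(1/r^2 : ℝ) ≤ 1 := by
    rw [mul_one_div, div_le_one (by positivity)]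
    nlinarith
  linarith

lemma Fker_mul_bound (hvanish : ∀ y ∈ Set.Icc (1 / 2 : ℝ) 1, f₁ (Complex.I * (y : ℂ)) = 0)
    (hρ : 2 ≤ ρ) (hε : ε = 1 ∨ ε = -1) (hr : 1 < r) (ht0 : 0 ≤ t) (htT : t < T) :
    ‖(ρ:ℂ) * Fker x₀ T f₁ x t (ρ:ℂ) ((r:ℂ)*(ε*e₁))‖ ≤ (2/(T-t)) * gb f₁ r := by
  have hr0 : (0:ℝ) < r := by linarith
  have hρ0 : (0:ℝ) < ρ := by linarith
  have hδ : (0:ℝ) < T - t := by linarith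
  rcases le_or_gt r 2 with h2 | h2
  · rw [Fker_zero hvanish hε hr h2, mul_zero, norm_zero]
    exact mul_nonneg (by positivity) (gb_nonneg hr0)
  · have hA : ‖Complex.exp (((x - x₀ : ℝ):ℂ)/2 * (ω*((r:ℂ)*(ε*e₁))))‖ = 1 := norm_expA _ hε
    have hB : ‖Complex.exp (((T - t : ℝ):ℂ)/4 * (ω*((r:ℂ)*(ε*e₁)))^2)‖ =
        Real.exp (-((T-t)*r^2)/4) := norm_expB _ hε
    have hC := pole_bound' hρ hε h2.le
    have hD : ‖ftilde0 f₁ (ω*((r:ℂ)*(ε*e₁))) *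
        Complex.exp (-((x:ℂ)/2) * (1/(ω*((r:ℂ)*(ε*e₁)))) +
          (t:ℂ)/4 * (1/(ω*((r:ℂ)*(ε*e₁))))^2) / (2*(Real.pi:ℂ)*Complex.I)‖
        ≤ ‖f₁ (I/(r:ℂ))‖ / (2*Real.pi) := by
      rw [norm_div, norm_mul, norm_2piI, norm_ftilde hε hr]
      have := norm_expC (ε := ε) x t ht0 hε hr0
      calc ‖f₁ (I/(r:ℂ))‖ * ‖Complex.exp (-((x:ℂ)/2) * (1/(ω*((r:ℂ)*(ε*e₁)))) +
            (t:ℂ)/4 * (1/(ω*((r:ℂ)*(ε*e₁))))^2)‖ / (2*Real.pi)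
          ≤ ‖f₁ (I/(r:ℂ))‖ * 1 / (2*Real.pi) := by gcongr
        _ = ‖f₁ (I/(r:ℂ))‖ / (2*Real.pi) := by rw [mul_one]
    have hnρ : ‖((ρ:ℂ))‖ = ρ := by
      rw [Complex.norm_real, Real.norm_eq_abs, _root_.abs_of_pos hρ0]
    have hexp : Real.exp (-((T-t)*r^2)/4) ≤ 4/((T-t)*r) := by
      have h4 := exp_decay hδ (by linarith : 1 ≤ r)
      rw [div_mul_eq_div_div]
      rw [le_div_iff₀ hr0]
      exact h4
    calc ‖(ρ:ℂ) * Fker x₀ T f₁ x t (ρ:ℂ) ((r:ℂ)*(ε*e₁))‖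
        = ‖Complex.exp (((T - t : ℝ):ℂ)/4 * (ω*((r:ℂ)*(ε*e₁)))^2)‖ *
          (ρ * ‖ω^2/(ω^2*((r:ℂ)*(ε*e₁)) - (ρ:ℂ)) -
            ω/((r:ℂ)*(ε*e₁))^2/(1/(ω^2*((r:ℂ)*(ε*e₁))) - (ρ:ℂ))‖) *
          (‖Complex.exp (((x - x₀ : ℝ):ℂ)/2 * (ω*((r:ℂ)*(ε*e₁))))‖ *
           ‖ftilde0 f₁ (ω*((r:ℂ)*(ε*e₁))) *
             Complex.exp (-((x:ℂ)/2) * (1/(ω*((r:ℂ)*(ε*e₁)))) +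
               (t:ℂ)/4 * (1/(ω*((r:ℂ)*(ε*e₁))))^2) / (2*(Real.pi:ℂ)*Complex.I)‖) := by
          rw [Fker, norm_mul, norm_mul, norm_mul, norm_mul, hnρ]
          ring
      _ ≤ Real.exp (-((T-t)*r^2)/4) * 3 * (1 * (‖f₁ (I/(r:ℂ))‖ / (2*Real.pi))) := by
          rw [hB, hA]
          gcongr
      _ ≤ (4/((T-t)*r)) * 3 * (1 * (‖f₁ (I/(r:ℂ))‖ / (2*Real.pi))) := by gcongr
      _ ≤ (2/(T-t)) * gb f₁ r := by
          rw [gb]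
          have hπ : (3:ℝ) < Real.pi := Real.pi_gt_three
          calc 4/((T-t)*r) * 3 * (1 * (‖f₁ (I/(r:ℂ))‖ / (2*Real.pi)))
              = (6/Real.pi) * (1/(T-t)) * (‖f₁ (I/(r:ℂ))‖/r) := by
                field_simp
                ring
            _ ≤ 2 * (1/(T-t)) * (‖f₁ (I/(r:ℂ))‖/r) := by
                gcongr
                rw [div_le_iff₀ (by linarith)]
                linarith
            _ = (2/(T-t)) * (‖f₁ (I/(r:ℂ))‖/r) := by ring

lemma F1ker_bound (hvanish : ∀ y ∈ Set.Icc (1 / 2 : ℝ) 1, f₁ (Complex.I * (y : ℂ)) = 0)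
    (hε : ε = 1 ∨ ε = -1) (hr : 1 < r) (ht0 : 0 ≤ t) (htT : t < T) :
    ‖F1ker x₀ T f₁ x t ((r:ℂ)*(ε*e₁))‖ ≤ (4/(T-t)) * gb f₁ r := by
  have hr0 : (0:ℝ) < r := by linarith
  have hδ : (0:ℝ) < T - t := by linarith
  rcases le_or_gt r 2 with h2 | h2
  · rw [F1ker_zero hvanish hε hr h2, norm_zero]
    exact mul_nonneg (by positivity) (gb_nonneg hr0)
  · have hA : ‖Complex.exp (((x - x₀ : ℝ):ℂ)/2 * (ω*((r:ℂ)*(ε*e₁))))‖ = 1 := norm_expA _ hε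
    have hB : ‖Complex.exp (((T - t : ℝ):ℂ)/4 * (ω*((r:ℂ)*(ε*e₁)))^2)‖ =
        Real.exp (-((T-t)*r^2)/4) := norm_expB _ hε
    have hC : ‖Complex.exp (-((x:ℂ)/2) * (1/(ω*((r:ℂ)*(ε*e₁)))) +
        (t:ℂ)/4 * (1/(ω*((r:ℂ)*(ε*e₁))))^2)‖ ≤ 1 := norm_expC x t ht0 hε hr0
    have hD : ‖ftilde0 f₁ (ω*((r:ℂ)*(ε*e₁))) / (2*(Real.pi:ℂ)*Complex.I)‖
        = ‖f₁ (I/(r:ℂ))‖ / (2*Real.pi) := by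
      rw [norm_div, norm_2piI, norm_ftilde hε hr]
    have hE : ‖ω^2 - ω/((r:ℂ)*(ε*e₁))^2‖ ≤ 2 := by
      calc ‖ω^2 - ω/((r:ℂ)*(ε*e₁))^2‖ ≤ ‖ω^2‖ + ‖ω/((r:ℂ)*(ε*e₁))^2‖ := norm_sub_le _ _
        _ = 1 + 1/r^2 := by rw [norm_w2, norm_div, norm_w, norm_k1sq hε hr0]
        _ ≤ 2 := by
            have : 1/r^2 ≤ 1 := by rw [div_le_one (by positivity)]; nlinarith
            linarith
    have hexp : Real.exp (-((T-t)*r^2)/4) ≤ 4/((T-t)*r) := by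
      have h4 := exp_decay hδ (by linarith : 1 ≤ r)
      rw [div_mul_eq_div_div, le_div_iff₀ hr0]
      exact h4
    calc ‖F1ker x₀ T f₁ x t ((r:ℂ)*(ε*e₁))‖
        = ‖Complex.exp (((x - x₀ : ℝ):ℂ)/2 * (ω*((r:ℂ)*(ε*e₁))))‖ *
          ‖Complex.exp (((T - t : ℝ):ℂ)/4 * (ω*((r:ℂ)*(ε*e₁)))^2)‖ *
          ‖Complex.exp (-((x:ℂ)/2) * (1/(ω*((r:ℂ)*(ε*e₁)))) +
            (t:ℂ)/4 * (1/(ω*((r:ℂ)*(ε*e₁))))^2)‖ *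
          ‖ftilde0 f₁ (ω*((r:ℂ)*(ε*e₁))) / (2*(Real.pi:ℂ)*Complex.I)‖ *
          ‖ω^2 - ω/((r:ℂ)*(ε*e₁))^2‖ := by
          rw [F1ker, norm_neg, norm_mul, norm_mul, norm_mul, norm_mul]
      _ ≤ 1 * Real.exp (-((T-t)*r^2)/4) * 1 * (‖f₁ (I/(r:ℂ))‖ / (2*Real.pi)) * 2 := by
          rw [hA, hB, hD]
          gcongr
      _ ≤ 1 * (4/((T-t)*r)) * 1 * (‖f₁ (I/(r:ℂ))‖ / (2*Real.pi)) * 2 := by gcongr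
      _ ≤ (4/(T-t)) * gb f₁ r := by
          rw [gb]
          have hπ : (3:ℝ) < Real.pi := Real.pi_gt_three
          calc (1:ℝ) * (4/((T-t)*r)) * 1 * (‖f₁ (I/(r:ℂ))‖ / (2*Real.pi)) * 2
              = (4/Real.pi) * (1/(T-t)) * (‖f₁ (I/(r:ℂ))‖/r) := by
                field_simp
            _ ≤ 4 * (1/(T-t)) * (‖f₁ (I/(r:ℂ))‖/r) := by
                gcongr
                rw [div_le_iff₀ (by linarith)]
                nlinarith
            _ = (4/(T-t)) * (‖f₁ (I/(r:ℂ))‖/r) := by ring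

end Aux10
namespace Aux10
open Complex Paper MeasureTheory Filter Topology Set

variable {ε ε' : ℂ} {r ρ x₀ T x t : ℝ} {k : ℂ} {f₁ : ℂ → ℂ}

lemma cont_coe : Continuous (fun r : ℝ => (r:ℂ)) := Complex.continuous_ofReal

lemma cont_k1 : Continuous (fun r : ℝ => (r:ℂ)*(ε*e₁)) := cont_coe.mul continuous_const

lemma cont_f1ray (hsmooth : ContDiffOn ℝ (⊤ : ℕ∞) (fun y : ℝ => f₁ (Complex.I * (y : ℂ)))
    (Set.Ioo (0 : ℝ) 1)) :
    ContinuousOn (fun r : ℝ => f₁ (I/(r:ℂ))) (Ioi 1) := by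
  have h1 : ContinuousOn (fun y : ℝ => f₁ (Complex.I * (y : ℂ))) (Ioo 0 1) :=
    hsmooth.continuousOn
  have h2 : ContinuousOn (fun r : ℝ => 1/r) (Ioi (1:ℝ)) :=
    ContinuousOn.div continuousOn_const continuousOn_id (fun r hr => by
      simp only [mem_Ioi] at hr; positivity)
  have h3 : MapsTo (fun r : ℝ => 1/r) (Ioi 1) (Ioo (0:ℝ) 1) := by
    intro r hr
    simp only [mem_Ioi] at hr
    constructor
    · positivity
    · rw [div_lt_one (by linarith)]; linarith
  have h4 := h1.comp h2 h3
  refine h4.congr (fun r hr => ?_)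
  simp only [mem_Ioi] at hr
  have hr' : (r:ℂ) ≠ 0 := Complex.ofReal_ne_zero.mpr (by positivity)
  show f₁ (I/(r:ℂ)) = f₁ (Complex.I * ((1/r : ℝ):ℂ))
  congr 1
  push_cast
  rw [mul_one_div]

lemma rtilde_den_ne (hr : 1 < r) : (1:ℂ) - ω^2*((r:ℂ)*I)^2 ≠ 0 := by
  have hk2 : ((r:ℂ)*I)^2 = -((r:ℂ)^2) := by linear_combination ((r:ℂ)^2) * Complex.I_sq
  rw [hk2, show (1:ℂ) - ω^2 * -((r:ℂ)^2) = 1 + ω^2 * ((r^2:ℝ):ℂ) by push_cast; ring]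
  intro h
  have hr4 : 1 ≤ r^2*r^2 := by nlinarith [sq_nonneg r, sq_nonneg (r-1), sq_nonneg (r+1), sq_nonneg (r^2-1)]
  have hpos : 0 < Complex.normSq (1 + ω^2 * ((r^2:ℝ):ℂ)) := by
    simp only [Complex.normSq_apply, Complex.add_re, Complex.add_im, Complex.mul_re,
      Complex.mul_im, hw2_re, hw2_im, Complex.ofReal_re, Complex.ofReal_im,
      Complex.one_re, Complex.one_im]
    nlinarith [s3_sq_real, sq_nonneg (1 - r^2/2), hr4]
  rw [h] at hpos
  simp at hpos

lemma cont_rtilde : ContinuousOn (fun r : ℝ => rtilde ((r:ℂ)*I)) (Ioi 1) := by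
  have hnum : Continuous (fun r : ℝ => ω^2 - ((r:ℂ)*I)^2) :=
    continuous_const.sub ((cont_coe.mul continuous_const).pow 2)
  have hden : Continuous (fun r : ℝ => (1:ℂ) - ω^2*((r:ℂ)*I)^2) :=
    continuous_const.sub (continuous_const.mul ((cont_coe.mul continuous_const).pow 2))
  exact ContinuousOn.div hnum.continuousOn hden.continuousOn
    (fun r hr => rtilde_den_ne hr)

lemma cont_ftilde (hsmooth : ContDiffOn ℝ (⊤ : ℕ∞) (fun y : ℝ => f₁ (Complex.I * (y : ℂ)))
    (Set.Ioo (0 : ℝ) 1)) (hε : ε = 1 ∨ ε = -1) :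
    ContinuousOn (fun r : ℝ => ftilde0 f₁ (ω*((r:ℂ)*(ε*e₁)))) (Ioi 1) := by
  rcases hε with rfl | rfl
  · refine ContinuousOn.congr (cont_rtilde.mul ((continuous_star.comp_continuousOn
      (cont_f1ray hsmooth)))) (fun r hr => ?_)
    simp only [mem_Ioi] at hr
    exact ftilde_plus (by linarith)
  · refine ContinuousOn.congr (cont_f1ray hsmooth) (fun r hr => ?_)
    simp only [mem_Ioi] at hr
    exact ftilde_minus (by linarith)

/-- Continuity of the kernel in the integration variable, for fixed admissible `k`. -/
lemma cont_Fker_snd (hsmooth : ContDiffOn ℝ (⊤ : ℕ∞) (fun y : ℝ => f₁ (Complex.I * (y : ℂ)))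
    (Set.Ioo (0 : ℝ) 1)) (hk : Adm k) (hε : ε = 1 ∨ ε = -1) :
    ContinuousOn (fun r : ℝ => Fker x₀ T f₁ x t k ((r:ℂ)*(ε*e₁))) (Ioi 1) := by
  have hk1ne : ∀ r : ℝ, r ∈ Ioi (1:ℝ) → (r:ℂ)*(ε*e₁) ≠ 0 := fun r hr =>
    k1_ne hε (by simp only [mem_Ioi] at hr; positivity)
  have hwk1ne : ∀ r : ℝ, r ∈ Ioi (1:ℝ) → ω*((r:ℂ)*(ε*e₁)) ≠ 0 := fun r hr =>
    mul_ne_zero w_ne (hk1ne r hr)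
  have hE1 : Continuous (fun r : ℝ =>
      Complex.exp (((x - x₀ : ℝ):ℂ)/2 * (ω*((r:ℂ)*(ε*e₁))))) :=
    Complex.continuous_exp.comp (continuous_const.mul (continuous_const.mul cont_k1))
  have hE2 : Continuous (fun r : ℝ =>
      Complex.exp (((T - t : ℝ):ℂ)/4 * (ω*((r:ℂ)*(ε*e₁)))^2)) :=
    Complex.continuous_exp.comp (continuous_const.mul ((continuous_const.mul cont_k1).pow 2))
  have hinv : ContinuousOn (fun r : ℝ => 1/(ω*((r:ℂ)*(ε*e₁)))) (Ioi 1) :=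
    ContinuousOn.div continuousOn_const
      ((continuous_const.mul cont_k1).continuousOn) hwk1ne
  have hE3 : ContinuousOn (fun r : ℝ =>
      Complex.exp (-((x:ℂ)/2) * (1/(ω*((r:ℂ)*(ε*e₁)))) +
        (t:ℂ)/4 * (1/(ω*((r:ℂ)*(ε*e₁))))^2)) (Ioi 1) :=
    Complex.continuous_exp.comp_continuousOn
      ((continuousOn_const.mul hinv).add (continuousOn_const.mul (hinv.pow 2)))
  have hpole : ContinuousOn (fun r : ℝ =>
      ω^2/(ω^2*((r:ℂ)*(ε*e₁)) - k) - ω/((r:ℂ)*(ε*e₁))^2/(1/(ω^2*((r:ℂ)*(ε*e₁))) - k))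
      (Ioi 1) := by
    have hd1 : ContinuousOn (fun r : ℝ => ω^2*((r:ℂ)*(ε*e₁)) - k) (Ioi 1) :=
      ((continuous_const.mul cont_k1).sub continuous_const).continuousOn
    have hd2 : ContinuousOn (fun r : ℝ => 1/(ω^2*((r:ℂ)*(ε*e₁))) - k) (Ioi 1) :=
      (ContinuousOn.div continuousOn_const ((continuous_const.mul cont_k1).continuousOn)
        (fun r hr => mul_ne_zero (pow_ne_zero _ w_ne) (hk1ne r hr))).sub continuousOn_const
    refine ContinuousOn.sub
      (ContinuousOn.div continuousOn_const hd1 (fun r hr => den1_ne hk hε hr))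
      (ContinuousOn.div
        (ContinuousOn.div continuousOn_const ((cont_k1.pow 2).continuousOn)
          (fun r hr => pow_ne_zero _ (hk1ne r hr)))
        hd2 (fun r hr => den2_ne hk hε hr))
  refine ContinuousOn.mul
    (ContinuousOn.mul (ContinuousOn.mul hE1.continuousOn hE2.continuousOn) hpole) ?_
  exact ContinuousOn.div ((cont_ftilde hsmooth hε).mul hE3) continuousOn_const
    (fun r _ => by
      simp only [ne_eq, mul_eq_zero]
      push_neg
      refine ⟨⟨two_ne_zero, ?_⟩, Complex.I_ne_zero⟩
      exact_mod_cast Real.pi_ne_zero)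

/-- Continuity of the kernel in the spectral variable along a ray. -/
lemma cont_Fker_fst (hε' : ε' = 1 ∨ ε' = -1) (hε : ε = 1 ∨ ε = -1) (hr : 1 < r) :
    ContinuousOn (fun ρ : ℝ => Fker x₀ T f₁ x t ((ρ:ℂ)*(ε'*e₁)) ((r:ℂ)*(ε*e₁))) (Ioi 1) := by
  have hpole : ContinuousOn (fun ρ : ℝ =>
      ω^2/(ω^2*((r:ℂ)*(ε*e₁)) - (ρ:ℂ)*(ε'*e₁)) -
        ω/((r:ℂ)*(ε*e₁))^2/(1/(ω^2*((r:ℂ)*(ε*e₁))) - (ρ:ℂ)*(ε'*e₁))) (Ioi 1) := by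
    refine ContinuousOn.sub
      (ContinuousOn.div continuousOn_const
        ((continuous_const.sub cont_k1).continuousOn)
        (fun ρ hρ => den1_ne (Adm_ray hε' hρ) hε hr))
      (ContinuousOn.div continuousOn_const
        ((continuous_const.sub cont_k1).continuousOn)
        (fun ρ hρ => den2_ne (Adm_ray hε' hρ) hε hr))
  exact (continuousOn_const.mul hpole).mul continuousOn_const |>.congr
    (fun ρ hρ => by rw [Fker]; rfl)

end Aux10
namespace Aux10
open Complex Paper MeasureTheory Filter Topology Set

variable {ε ε' : ℂ} {r ρ x₀ T x t : ℝ} {k : ℂ} {f₁ : ℂ → ℂ}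

lemma norm_e2 : ‖e₂‖ = 1 := by rw [he2, norm_neg, norm_e1]

lemma ray1 : ∀ r : ℝ, ((r:ℂ)*e₁) = ((r:ℂ)*((1:ℂ)*e₁)) := fun r => by ring

lemma ray2 : ∀ r : ℝ, ((r:ℂ)*e₂) = ((r:ℂ)*((-1:ℂ)*e₁)) := fun r => by rw [he2]; ring

lemma contourInt_norm_le {φ : ℂ → ℂ} {ψ : ℝ → ℝ}
    (hψ : IntegrableOn ψ (Ioi 1))
    (hb1 : ∀ r ∈ Ioi (1:ℝ), ‖φ ((r:ℂ)*e₁)‖ ≤ ψ r)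
    (hb2 : ∀ r ∈ Ioi (1:ℝ), ‖φ ((r:ℂ)*e₂)‖ ≤ ψ r) :
    ‖contourInt φ‖ ≤ 2 * ∫ r in Ioi 1, ψ r := by
  have h1 : ‖∫ r in Ioi (1:ℝ), φ ((r:ℂ)*e₁)‖ ≤ ∫ r in Ioi (1:ℝ), ψ r :=
    norm_integral_le_of_norm_le hψ ((ae_restrict_iff' measurableSet_Ioi).mpr (ae_of_all _ hb1))
  have h2 : ‖∫ r in Ioi (1:ℝ), φ ((r:ℂ)*e₂)‖ ≤ ∫ r in Ioi (1:ℝ), ψ r :=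
    norm_integral_le_of_norm_le hψ ((ae_restrict_iff' measurableSet_Ioi).mpr (ae_of_all _ hb2))
  calc ‖contourInt φ‖
      ≤ ‖(∫ r in Ioi (1:ℝ), φ ((r:ℂ)*e₁)) * e₁‖ + ‖(∫ r in Ioi (1:ℝ), φ ((r:ℂ)*e₂)) * e₂‖ :=
        norm_add_le _ _
    _ = ‖∫ r in Ioi (1:ℝ), φ ((r:ℂ)*e₁)‖ + ‖∫ r in Ioi (1:ℝ), φ ((r:ℂ)*e₂)‖ := by
        rw [norm_mul, norm_mul, norm_e1, norm_e2, mul_one, mul_one]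
    _ ≤ (∫ r in Ioi (1:ℝ), ψ r) + (∫ r in Ioi (1:ℝ), ψ r) := add_le_add h1 h2
    _ = 2 * ∫ r in Ioi (1:ℝ), ψ r := by ring

lemma contourInt_const_mul (c : ℂ) (φ : ℂ → ℂ) :
    contourInt (fun z => c * φ z) = c * contourInt φ := by
  rw [contourInt, contourInt, integral_const_mul, integral_const_mul]
  ring

end Aux10
namespace Aux10
open Complex Paper MeasureTheory Filter Topology Set

variable {x₀ T M x t : ℝ} {f₁ : ℂ → ℂ}

/-- Bound and continuity for the iterated kernels. -/
theorem mSeq_props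
    (hsmooth : ContDiffOn ℝ (⊤ : ℕ∞) (fun y : ℝ => f₁ (Complex.I * (y : ℂ))) (Set.Ioo (0 : ℝ) 1))
    (hvanish : ∀ y ∈ Set.Icc (1 / 2 : ℝ) 1, f₁ (Complex.I * (y : ℂ)) = 0)
    (hL1 : IntegrableOn (fun y : ℝ => ‖f₁ (Complex.I / (y : ℂ))‖ / y) (Set.Ioi 1))
    (ht0 : 0 ≤ t) (htT : t < T) : ∀ j : ℕ,
    (∀ k, Adm k → ‖mSeq (Fker x₀ T f₁ x t) j k‖ ≤
      ((3/Real.pi) * ∫ r in Ioi (1:ℝ), gb f₁ r)^j) ∧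
    (∀ ε : ℂ, (ε = 1 ∨ ε = -1) →
      ContinuousOn (fun r : ℝ => mSeq (Fker x₀ T f₁ x t) j ((r:ℂ)*(ε*e₁))) (Ioi 1)) := by
  have hInt : IntegrableOn (gb f₁) (Ioi 1) := hL1
  have hintnn : 0 ≤ ∫ r in Ioi (1:ℝ), gb f₁ r :=
    setIntegral_nonneg measurableSet_Ioi (fun r hr => gb_nonneg (lt_trans one_pos hr))
  set a : ℝ := (3/Real.pi) * ∫ r in Ioi (1:ℝ), gb f₁ r with ha
  have ha0 : 0 ≤ a := mul_nonneg (by positivity) hintnn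
  intro j
  induction j with
  | zero =>
      constructor
      · intro k _
        simp [mSeq]
      · intro ε hε
        simp only [mSeq]
        exact continuousOn_const
  | succ j IH =>
      obtain ⟨IH1, IH2⟩ := IH
      set c : ℝ := (3/(2*Real.pi)) * a^j with hc
      have hc0 : 0 ≤ c := mul_nonneg (by positivity) (pow_nonneg ha0 j)
      have hψint : Integrable (fun r => c * gb f₁ r) (volume.restrict (Ioi 1)) :=
        hInt.const_mul c
      -- pointwise bound for the integrand, any admissible k, any ray ε
      have hbd : ∀ kk, Adm kk → ∀ ε : ℂ, (ε = 1 ∨ ε = -1) → ∀ r ∈ Ioi (1:ℝ),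
          ‖Fker x₀ T f₁ x t kk ((r:ℂ)*(ε*e₁)) *
            mSeq (Fker x₀ T f₁ x t) j ((r:ℂ)*(ε*e₁))‖ ≤ c * gb f₁ r := by
        intro kk hkk ε hε r hr
        simp only [mem_Ioi] at hr
        rw [norm_mul]
        calc ‖Fker x₀ T f₁ x t kk ((r:ℂ)*(ε*e₁))‖ *
              ‖mSeq (Fker x₀ T f₁ x t) j ((r:ℂ)*(ε*e₁))‖
            ≤ ((3/(2*Real.pi)) * gb f₁ r) * a^j := by
              have h1 := Fker_bound (x₀ := x₀) (x := x) hvanish hkk hε hr ht0 htT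
              have h2 := IH1 _ (Adm_ray hε hr)
              exact mul_le_mul h1 h2 (norm_nonneg _)
                (mul_nonneg (by positivity) (gb_nonneg (by linarith)))
          _ = c * gb f₁ r := by rw [hc]; ring
      -- measurability of the integrand
      have hms : ∀ kk, Adm kk → ∀ ε : ℂ, (ε = 1 ∨ ε = -1) →
          AEStronglyMeasurable (fun r : ℝ => Fker x₀ T f₁ x t kk ((r:ℂ)*(ε*e₁)) *
            mSeq (Fker x₀ T f₁ x t) j ((r:ℂ)*(ε*e₁))) (volume.restrict (Ioi 1)) := by
        intro kk hkk ε hε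
        exact ((cont_Fker_snd hsmooth hkk hε).mul (IH2 ε hε)).aestronglyMeasurable
          measurableSet_Ioi
      constructor
      · intro k hk
        have hle : ‖mSeq (Fker x₀ T f₁ x t) (j+1) k‖ ≤ 2 * ∫ r in Ioi (1:ℝ), c * gb f₁ r := by
          show ‖contourInt (fun k₁ => Fker x₀ T f₁ x t k k₁ *
            mSeq (Fker x₀ T f₁ x t) j k₁)‖ ≤ _
          refine contourInt_norm_le hψint ?_ ?_
          · intro r hr
            rw [ray1 r]
            exact hbd k hk 1 (Or.inl rfl) r hr
          · intro r hr
            rw [ray2 r]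
            exact hbd k hk (-1) (Or.inr rfl) r hr
        refine hle.trans ?_
        rw [integral_const_mul]
        calc 2 * (c * ∫ r in Ioi (1:ℝ), gb f₁ r) = a^(j+1) := by
              rw [hc, ha, pow_succ]
              ring
          _ ≤ a^(j+1) := le_refl _
      · intro ε' hε'
        have key : ∀ εi : ℂ, (εi = 1 ∨ εi = -1) →
            ContinuousOn (fun ρ : ℝ => ∫ r in Ioi (1:ℝ),
              Fker x₀ T f₁ x t ((ρ:ℂ)*(ε'*e₁)) ((r:ℂ)*(εi*e₁)) *
                mSeq (Fker x₀ T f₁ x t) j ((r:ℂ)*(εi*e₁))) (Ioi 1) := by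
          intro εi hεi
          refine continuousOn_of_dominated ?_ ?_ hψint ?_
          · intro ρ hρ
            simp only [mem_Ioi] at hρ
            exact hms _ (Adm_ray hε' hρ) εi hεi
          · intro ρ hρ
            simp only [mem_Ioi] at hρ
            refine (ae_restrict_iff' measurableSet_Ioi).mpr (ae_of_all _ ?_)
            exact hbd _ (Adm_ray hε' hρ) εi hεi
          · refine (ae_restrict_iff' measurableSet_Ioi).mpr (ae_of_all _ ?_)
            intro r hr
            simp only [mem_Ioi] at hr
            exact (cont_Fker_fst hε' hεi hr).mul continuousOn_const
        have e1cont := (key 1 (Or.inl rfl)).mul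
          (continuousOn_const : ContinuousOn (fun _ : ℝ => e₁) (Ioi 1))
        have e2cont := (key (-1) (Or.inr rfl)).mul
          (continuousOn_const : ContinuousOn (fun _ : ℝ => e₂) (Ioi 1))
        refine (e1cont.add e2cont).congr (fun ρ hρ => ?_)
        show mSeq (Fker x₀ T f₁ x t) (j+1) ((ρ:ℂ)*(ε'*e₁)) = _
        simp only [mSeq, contourInt]
        congr 2
        · refine integral_congr_ae (ae_of_all _ (fun r => ?_))
          simp only [ray1]
        · refine integral_congr_ae (ae_of_all _ (fun r => ?_))
          simp only [ray2]

end Aux10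
namespace Aux10
open Complex Paper MeasureTheory Filter Topology Set

variable {ε : ℂ} {r ρ x₀ T M x t : ℝ} {f₁ : ℂ → ℂ}

lemma tendsto_div_neg_one (c : ℂ) :
    Tendsto (fun ρ : ℝ => (ρ:ℂ)/(c - (ρ:ℂ))) atTop (𝓝 (-1)) := by
  have h1 : Tendsto (fun ρ : ℝ => ‖c - (ρ:ℂ)‖) atTop atTop := by
    refine tendsto_atTop_mono' atTop ?_ (tendsto_atTop_add_const_right _ (-‖c‖) tendsto_id)
    refine Eventually.of_forall (fun ρ => ?_)
    have h2 : ‖(ρ:ℂ)‖ - ‖c‖ ≤ ‖(ρ:ℂ) - c‖ := norm_sub_norm_le _ _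
    rw [norm_sub_rev] at h2
    have h3 : ρ ≤ ‖(ρ:ℂ)‖ := by
      rw [Complex.norm_real, Real.norm_eq_abs]
      exact le_abs_self ρ
    show id ρ + -‖c‖ ≤ ‖c - (ρ:ℂ)‖
    simp only [id]
    linarith
  have h2 : Tendsto (fun ρ : ℝ => (c - (ρ:ℂ))⁻¹) atTop (𝓝 0) := by
    rw [tendsto_zero_iff_norm_tendsto_zero]
    simp only [norm_inv]
    exact tendsto_inv_atTop_zero.comp h1
  have h3 : Tendsto (fun ρ : ℝ => (-1:ℂ) + c * (c - (ρ:ℂ))⁻¹) atTop (𝓝 (-1)) := by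
    have h4 := tendsto_const_nhds (α := ℝ) (f := atTop) (x := (-1:ℂ))
    have h5 := h4.add (h2.const_mul c)
    simpa using h5
  refine h3.congr' ?_
  filter_upwards [eventually_gt_atTop (‖c‖)] with ρ hρ
  have hne : c - (ρ:ℂ) ≠ 0 := by
    intro h
    have hc : c = (ρ:ℂ) := sub_eq_zero.mp h
    rw [hc, Complex.norm_real, Real.norm_eq_abs] at hρ
    have := le_abs_self ρ
    linarith
  field_simp
  ring

lemma tendsto_kF (hsm : True) (hε : ε = 1 ∨ ε = -1) (hr : 1 < r) :
    Tendsto (fun ρ : ℝ => (ρ:ℂ) * Fker x₀ T f₁ x t (ρ:ℂ) ((r:ℂ)*(ε*e₁))) atTop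
      (𝓝 (F1ker x₀ T f₁ x t ((r:ℂ)*(ε*e₁)))) := by
  set k₁ : ℂ := (r:ℂ)*(ε*e₁) with hk₁
  set A : ℂ := Complex.exp (((x - x₀ : ℝ):ℂ)/2 * (ω*k₁)) *
    Complex.exp (((T - t : ℝ):ℂ)/4 * (ω*k₁)^2) *
    (ftilde0 f₁ (ω*k₁) *
      Complex.exp (-((x:ℂ)/2) * (1/(ω*k₁)) + (t:ℂ)/4 * (1/(ω*k₁))^2) /
      (2*(Real.pi:ℂ)*Complex.I)) with hA
  have hEq : ∀ ρ : ℝ, (ρ:ℂ) * Fker x₀ T f₁ x t (ρ:ℂ) k₁ =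
      A * (ω^2 * ((ρ:ℂ)/(ω^2*k₁ - (ρ:ℂ))) - (ω/k₁^2) * ((ρ:ℂ)/(1/(ω^2*k₁) - (ρ:ℂ)))) := by
    intro ρ
    rw [Fker, hA]
    ring
  have hT1 := (tendsto_div_neg_one (ω^2*k₁)).const_mul (ω^2)
  have hT2 := (tendsto_div_neg_one (1/(ω^2*k₁))).const_mul (ω/k₁^2)
  have hT := (tendsto_const_nhds (α := ℝ) (f := atTop) (x := A)).mul (hT1.sub hT2)
  have hval : A * (ω^2 * (-1) - (ω/k₁^2) * (-1)) = F1ker x₀ T f₁ x t k₁ := by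
    rw [F1ker, hA]
    ring
  rw [hval] at hT
  exact hT.congr (fun ρ => (hEq ρ).symm)

end Aux10
/-- Lemma 5.1: for each `x ∈ ℝ` and `t ∈ [0,T)`, the limit `lim_{k→+∞} k(m(x,t,k)-1)`
(along real `k ∈ (1,∞)`) exists and equals the absolutely convergent series
`Σ_{j=1}^∞ m_j^{(1)}(x,t)`. -/
theorem statement_10 (x₀ T M : ℝ) (hT : 0 < T) (hM : 2 ≤ M) (f₁ : ℂ → ℂ)
    (hsmooth : ContDiffOn ℝ (⊤ : ℕ∞) (fun y : ℝ => f₁ (Complex.I * (y : ℂ))) (Set.Ioo (0 : ℝ) 1))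
    (hvanish : ∀ y ∈ Set.Icc (1 / 2 : ℝ) 1, f₁ (Complex.I * (y : ℂ)) = 0)
    (hL1 : IntegrableOn (fun y : ℝ => ‖f₁ (Complex.I / (y : ℂ))‖ / y) (Set.Ioi 1))
    (hL1le : ∫ y in Set.Ioi (1 : ℝ), ‖f₁ (Complex.I / (y : ℂ))‖ / y ≤ 1 / M)
    (x t : ℝ) (ht : t ∈ Set.Ico (0 : ℝ) T) :
    (Summable fun j : ℕ => ‖m1Seq x₀ T f₁ x t j‖) ∧
    Tendsto (fun k : ℝ => (k : ℂ) * (mFun x₀ T f₁ x t k - 1)) atTop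
      (𝓝 (∑' j : ℕ, m1Seq x₀ T f₁ x t j)) := by
  open Aux10 Set Complex in
  obtain ⟨ht0, htT⟩ := ht
  have hδ : (0:ℝ) < T - t := by linarith
  have hInt : IntegrableOn (gb f₁) (Ioi 1) := hL1
  have hintnn : 0 ≤ ∫ r in Ioi (1:ℝ), gb f₁ r :=
    setIntegral_nonneg measurableSet_Ioi (fun r hr => gb_nonneg (lt_trans one_pos hr))
  have props := mSeq_props (x₀ := x₀) (T := T) (x := x) (t := t) hsmooth hvanish hL1 ht0 htT
  set aa : ℝ := (3/Real.pi) * ∫ r in Ioi (1:ℝ), gb f₁ r with haa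
  have ha0 : 0 ≤ aa := mul_nonneg (by positivity) hintnn
  have ha1 : aa < 1 := by
    have h1 : ∫ r in Ioi (1:ℝ), gb f₁ r ≤ 1/M := hL1le
    have hM0 : (0:ℝ) < M := by linarith
    have h2 : 1/M ≤ 1/2 := by
      rw [div_le_div_iff₀ hM0 (by norm_num)]
      linarith
    have hπ : (3:ℝ) < Real.pi := Real.pi_gt_three
    calc aa ≤ (3/Real.pi) * (1/2) := by
          exact mul_le_mul_of_nonneg_left (le_trans h1 h2) (by positivity)
      _ < 1 := by
          rw [show (3/Real.pi) * (1/2 : ℝ) = 3/(2*Real.pi) by ring,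
            div_lt_one (by positivity)]
          linarith
  -- bound for the m1 sequence
  have hm1bd : ∀ j : ℕ, ‖m1Seq x₀ T f₁ x t j‖ ≤
      (2*((4/(T-t)) * ∫ r in Ioi (1:ℝ), gb f₁ r)) * aa^j := by
    intro j
    have hψ : Integrable (fun r => ((4/(T-t))*aa^j) * gb f₁ r) (volume.restrict (Ioi 1)) :=
      hInt.const_mul _
    have hb : ∀ ε:ℂ, (ε=1 ∨ ε=-1) → ∀ r ∈ Ioi (1:ℝ),
        ‖F1ker x₀ T f₁ x t ((r:ℂ)*(ε*e₁)) * mSeq (Fker x₀ T f₁ x t) j ((r:ℂ)*(ε*e₁))‖ ≤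
          ((4/(T-t))*aa^j) * gb f₁ r := by
      intro ε hε r hr
      simp only [mem_Ioi] at hr
      rw [norm_mul]
      have h1 := F1ker_bound (x₀ := x₀) (x := x) hvanish hε hr ht0 htT
      have h2 := (props j).1 _ (Adm_ray hε hr)
      calc ‖F1ker x₀ T f₁ x t ((r:ℂ)*(ε*e₁))‖ * ‖mSeq (Fker x₀ T f₁ x t) j ((r:ℂ)*(ε*e₁))‖
          ≤ ((4/(T-t)) * gb f₁ r) * aa^j :=
            mul_le_mul h1 h2 (norm_nonneg _)
              (mul_nonneg (by positivity) (gb_nonneg (by linarith)))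
        _ = ((4/(T-t))*aa^j) * gb f₁ r := by ring
    have hle : ‖m1Seq x₀ T f₁ x t j‖ ≤ 2 * ∫ r in Ioi (1:ℝ), ((4/(T-t))*aa^j) * gb f₁ r := by
      rw [m1Seq]
      refine contourInt_norm_le hψ ?_ ?_ <;> intro r hr
      · rw [ray1 r]; exact hb 1 (Or.inl rfl) r hr
      · rw [ray2 r]; exact hb (-1) (Or.inr rfl) r hr
    refine hle.trans (le_of_eq ?_)
    rw [integral_const_mul]
    ring
  have hsum1 : Summable (fun j:ℕ => (2*((4/(T-t)) * ∫ r in Ioi (1:ℝ), gb f₁ r)) * aa^j) :=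
    (summable_geometric_of_lt_one ha0 ha1).mul_left _
  have hSummNorm : Summable fun j => ‖m1Seq x₀ T f₁ x t j‖ :=
    Summable.of_nonneg_of_le (fun j => norm_nonneg _) hm1bd hsum1
  refine ⟨hSummNorm, ?_⟩
  have hsum2 : Summable (fun j:ℕ => (2*((2/(T-t)) * ∫ r in Ioi (1:ℝ), gb f₁ r)) * aa^j) :=
    (summable_geometric_of_lt_one ha0 ha1).mul_left _
  -- per-j limits
  have hab : ∀ j:ℕ, Tendsto (fun ρ:ℝ => (ρ:ℂ) * mSeq (Fker x₀ T f₁ x t) (j+1) (ρ:ℂ)) atTop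
      (𝓝 (m1Seq x₀ T f₁ x t j)) := by
    intro j
    have hray : ∀ ε:ℂ, (ε=1 ∨ ε=-1) →
        Tendsto (fun ρ:ℝ => ∫ r in Ioi (1:ℝ),
            (ρ:ℂ)*(Fker x₀ T f₁ x t (ρ:ℂ) ((r:ℂ)*(ε*e₁)) *
              mSeq (Fker x₀ T f₁ x t) j ((r:ℂ)*(ε*e₁)))) atTop
          (𝓝 (∫ r in Ioi (1:ℝ), F1ker x₀ T f₁ x t ((r:ℂ)*(ε*e₁)) *
              mSeq (Fker x₀ T f₁ x t) j ((r:ℂ)*(ε*e₁)))) := by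
      intro ε hε
      refine tendsto_integral_filter_of_dominated_convergence
        (fun r => ((2/(T-t))*aa^j) * gb f₁ r) ?_ ?_ (hInt.const_mul _) ?_
      · filter_upwards [eventually_ge_atTop (2:ℝ)] with ρ hρ
        have hadm : Adm ((ρ:ℝ):ℂ) := Or.inr ⟨ρ, hρ, rfl⟩
        exact (((cont_Fker_snd hsmooth hadm hε).mul
          ((props j).2 ε hε)).aestronglyMeasurable measurableSet_Ioi).const_mul _
      · filter_upwards [eventually_ge_atTop (2:ℝ)] with ρ hρ
        refine (ae_restrict_iff' measurableSet_Ioi).mpr (ae_of_all _ (fun r hr => ?_))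
        simp only [mem_Ioi] at hr
        have h1 := Fker_mul_bound (x₀ := x₀) (x := x) hvanish hρ hε hr ht0 htT
        have h2 := (props j).1 _ (Adm_ray hε hr)
        calc ‖(ρ:ℂ)*(Fker x₀ T f₁ x t (ρ:ℂ) ((r:ℂ)*(ε*e₁)) *
              mSeq (Fker x₀ T f₁ x t) j ((r:ℂ)*(ε*e₁)))‖
            = ‖(ρ:ℂ)*Fker x₀ T f₁ x t (ρ:ℂ) ((r:ℂ)*(ε*e₁))‖ *
              ‖mSeq (Fker x₀ T f₁ x t) j ((r:ℂ)*(ε*e₁))‖ := by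
              rw [← mul_assoc, norm_mul]
          _ ≤ ((2/(T-t)) * gb f₁ r) * aa^j :=
              mul_le_mul h1 h2 (norm_nonneg _)
                (mul_nonneg (by positivity) (gb_nonneg (by linarith)))
          _ = ((2/(T-t))*aa^j) * gb f₁ r := by ring
      · refine (ae_restrict_iff' measurableSet_Ioi).mpr (ae_of_all _ (fun r hr => ?_))
        simp only [mem_Ioi] at hr
        have h1 := (tendsto_kF (x₀ := x₀) (T := T) (x := x) (t := t) (f₁ := f₁)
          trivial hε hr).mul_const (mSeq (Fker x₀ T f₁ x t) j ((r:ℂ)*(ε*e₁)))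
        refine h1.congr (fun ρ => ?_)
        rw [mul_assoc]
    have hcomb := ((hray 1 (Or.inl rfl)).mul_const e₁).add
      ((hray (-1) (Or.inr rfl)).mul_const e₂)
    have hlim : (∫ r in Ioi (1:ℝ), F1ker x₀ T f₁ x t ((r:ℂ)*((1:ℂ)*e₁)) *
          mSeq (Fker x₀ T f₁ x t) j ((r:ℂ)*((1:ℂ)*e₁)))*e₁ +
        (∫ r in Ioi (1:ℝ), F1ker x₀ T f₁ x t ((r:ℂ)*((-1:ℂ)*e₁)) *
          mSeq (Fker x₀ T f₁ x t) j ((r:ℂ)*((-1:ℂ)*e₁)))*e₂ = m1Seq x₀ T f₁ x t j := by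
      rw [m1Seq, contourInt]
      congr 2 <;> refine integral_congr_ae (ae_of_all _ (fun r => ?_)) <;>
        simp only [ray1, ray2]
    rw [hlim] at hcomb
    refine hcomb.congr (fun ρ => ?_)
    have heq : (ρ:ℂ) * mSeq (Fker x₀ T f₁ x t) (j+1) ((ρ:ℝ):ℂ) =
        contourInt (fun k₁ => (ρ:ℂ)*(Fker x₀ T f₁ x t (ρ:ℂ) k₁ *
          mSeq (Fker x₀ T f₁ x t) j k₁)) := (contourInt_const_mul _ _).symm
    rw [heq, contourInt]
    congr 2 <;> refine integral_congr_ae (ae_of_all _ (fun r => ?_)) <;>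
      simp only [ray1, ray2]
  -- uniform geometric bound
  have hbd : ∀ᶠ ρ:ℝ in atTop, ∀ j:ℕ, ‖(ρ:ℂ) * mSeq (Fker x₀ T f₁ x t) (j+1) (ρ:ℂ)‖ ≤
      (2*((2/(T-t)) * ∫ r in Ioi (1:ℝ), gb f₁ r)) * aa^j := by
    filter_upwards [eventually_ge_atTop (2:ℝ)] with ρ hρ
    intro j
    have heq : (ρ:ℂ) * mSeq (Fker x₀ T f₁ x t) (j+1) ((ρ:ℝ):ℂ) =
        contourInt (fun k₁ => (ρ:ℂ)*(Fker x₀ T f₁ x t (ρ:ℂ) k₁ *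
          mSeq (Fker x₀ T f₁ x t) j k₁)) := (contourInt_const_mul _ _).symm
    rw [heq]
    have hb : ∀ ε:ℂ, (ε=1 ∨ ε=-1) → ∀ r ∈ Ioi (1:ℝ),
        ‖(ρ:ℂ)*(Fker x₀ T f₁ x t (ρ:ℂ) ((r:ℂ)*(ε*e₁)) *
          mSeq (Fker x₀ T f₁ x t) j ((r:ℂ)*(ε*e₁)))‖ ≤ ((2/(T-t))*aa^j) * gb f₁ r := by
      intro ε hε r hr
      simp only [mem_Ioi] at hr
      have h1 := Fker_mul_bound (x₀ := x₀) (x := x) hvanish hρ hε hr ht0 htT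
      have h2 := (props j).1 _ (Adm_ray hε hr)
      calc ‖(ρ:ℂ)*(Fker x₀ T f₁ x t (ρ:ℂ) ((r:ℂ)*(ε*e₁)) *
            mSeq (Fker x₀ T f₁ x t) j ((r:ℂ)*(ε*e₁)))‖
          = ‖(ρ:ℂ)*Fker x₀ T f₁ x t (ρ:ℂ) ((r:ℂ)*(ε*e₁))‖ *
            ‖mSeq (Fker x₀ T f₁ x t) j ((r:ℂ)*(ε*e₁))‖ := by
            rw [← mul_assoc, norm_mul]
        _ ≤ ((2/(T-t)) * gb f₁ r) * aa^j :=
            mul_le_mul h1 h2 (norm_nonneg _)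
              (mul_nonneg (by positivity) (gb_nonneg (by linarith)))
        _ = ((2/(T-t))*aa^j) * gb f₁ r := by ring
    have hle := contourInt_norm_le (φ := fun k₁ => (ρ:ℂ)*(Fker x₀ T f₁ x t (ρ:ℂ) k₁ *
        mSeq (Fker x₀ T f₁ x t) j k₁)) (hInt.const_mul ((2/(T-t))*aa^j)) ?_ ?_
    · refine hle.trans (le_of_eq ?_)
      rw [integral_const_mul]
      ring
    · intro r hr
      rw [ray1 r]
      exact hb 1 (Or.inl rfl) r hr
    · intro r hr
      rw [ray2 r]
      exact hb (-1) (Or.inr rfl) r hr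
  have tannery := tendsto_tsum_of_dominated_convergence hsum2 hab hbd
  refine tannery.congr (fun ρ => ?_)
  rw [tsum_mul_left, mFun, add_sub_cancel_left]
end
end
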